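/- arXiv:2009.03074 — 3 statements merged into one kernel-verified Lean document; each statement's English description precedes it below -/
import Mathlib

section
/- Let G be an r-SPTG in which all non-final locations are urgent. For every location ℓ and every ν ∈ [0,r], if Val_G(ℓ,ν) is finite then there exists f ∈ F_G such that Val_G(ℓ,ν) = f(ν), where F_G = {k + φ_{ℓ′} : ℓ′ ∈ L_Fin, k ∈ ℤ, −(|L|−1)·w_T ≤ k ≤ (|L|−1)·w_T}. -/
/-!
Formalization of (simple) priced timed games (SPTGs) following
"One-Clock Priced Timed Games with Negative Weights"
(Brihaye, Geeraerts, Haddad, Lefaucheux, Monmege).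
-/

noncomputable section
open scoped Classical

/-- `f` decomposes, on `[a,b]`, into `n` affine pieces with rational slopes and
rational interior cutpoints.  (This entails in particular that `f` is finite and
continuous on `[a,b]`.) -/
def AffinePiecesOn (f : ℝ → EReal) (a b : ℝ) (n : ℕ) : Prop :=
  ∃ c : ℕ → ℝ, c 0 = a ∧ c n = b ∧ (∀ i < n, c i < c (i + 1)) ∧
    (∀ i, 0 < i → i < n → ∃ q : ℚ, c i = (q : ℝ)) ∧
    (∀ i < n, ∃ (m : ℚ) (q : ℝ), ∀ x : ℝ, c i ≤ x → x ≤ c (i + 1) →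
      f x = (((m : ℝ) * x + q : ℝ) : EReal))

/-- A cost function over `[a,b]`: either constantly `+∞`, or constantly `-∞`, or
continuous and piecewise affine with rational slopes and finitely many rational
cutpoints. -/
def CostFunctionOn (f : ℝ → EReal) (a b : ℝ) : Prop :=
  (∀ x : ℝ, a ≤ x → x ≤ b → f x = ⊤) ∨ (∀ x : ℝ, a ≤ x → x ≤ b → f x = ⊥) ∨
    ∃ n : ℕ, AffinePiecesOn f a b n

/-- `x` and `y` lie in the same interval (open interval or singleton) of the
partition of the line induced by the finite set of points `P`. -/
def sameInt (P : Finset ℚ) (x y : ℝ) : Prop :=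
  ∀ p ∈ P, (((p : ℝ) < x) ↔ ((p : ℝ) < y)) ∧ ((x < (p : ℝ)) ↔ (y < (p : ℝ)))

/-- An `r`-SPTG (simple priced timed game). Locations are partitioned into those of
player Min, player Max and the final ones; some non-final locations are urgent;
transitions carry integer weights, non-final locations carry integer rates, final
locations carry affine final cost functions.  The clock stays in `[0,r]`. -/
structure SPTG where
  Loc : Type
  [fintypeLoc : Fintype Loc]
  [decEqLoc : DecidableEq Loc]
  isMin : Loc → Prop
  isMax : Loc → Prop
  isFin : Loc → Prop
  partition : ∀ ℓ, (isMin ℓ ∧ ¬isMax ℓ ∧ ¬isFin ℓ) ∨ (¬isMin ℓ ∧ isMax ℓ ∧ ¬isFin ℓ) ∨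
    (¬isMin ℓ ∧ ¬isMax ℓ ∧ isFin ℓ)
  isUrg : Loc → Prop
  urg_not_fin : ∀ ℓ, isUrg ℓ → ¬isFin ℓ
  trans : Loc → Loc → Prop
  trans_not_fin : ∀ ℓ ℓ', trans ℓ ℓ' → ¬isFin ℓ
  r : ℝ
  r_nonneg : 0 ≤ r
  r_le_one : r ≤ 1
  finSlope : Loc → ℝ
  finIntercept : Loc → ℝ
  locWt : Loc → ℤ
  transWt : Loc → Loc → ℤ

attribute [instance] SPTG.fintypeLoc SPTG.decEqLoc

namespace SPTG

/-- The final cost functions have rational coefficients (this is part of the paper's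
definition of an SPTG). -/
def ratFinal (G : SPTG) : Prop :=
  ∀ ℓ : G.Loc, (∃ a : ℚ, G.finSlope ℓ = (a : ℝ)) ∧ ∃ b : ℚ, G.finIntercept ℓ = (b : ℝ)

/-- The final cost function `φ_ℓ`. -/
def finalCost (G : SPTG) (ℓ : G.Loc) (ν : ℝ) : ℝ := G.finSlope ℓ * ν + G.finIntercept ℓ

/-- A configuration: a location together with a clock value. -/
abbrev Conf (G : SPTG) := G.Loc × ℝ

def validConf (G : SPTG) (s : G.Conf) : Prop := 0 ≤ s.2 ∧ s.2 ≤ G.r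

/-- A move: a delay `t` together with a transition (determined by its target). -/
structure Move (G : SPTG) where
  t : ℝ
  tgt : G.Loc

/-- The move `m` is available from configuration `s`. -/
def canMove (G : SPTG) (s : G.Conf) (m : G.Move) : Prop :=
  0 ≤ m.t ∧ s.2 + m.t ≤ G.r ∧ G.trans s.1 m.tgt ∧ (G.isUrg s.1 → m.t = 0)

/-- Cost `π(δ) + t·π(ℓ)` of a move. -/
def moveCost (G : SPTG) (s : G.Conf) (m : G.Move) : ℝ :=
  (G.transWt s.1 m.tgt : ℝ) + m.t * (G.locWt s.1 : ℝ)

def applyMove (G : SPTG) (s : G.Conf) (m : G.Move) : G.Conf := (m.tgt, s.2 + m.t)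

def deadlock (G : SPTG) (s : G.Conf) : Prop := ¬∃ m : G.Move, G.canMove s m

/-- A finite play is represented by its initial configuration together with the
list of successive moves; `ValidFrom s l` states that all these moves are legal. -/
def ValidFrom (G : SPTG) : G.Conf → List G.Move → Prop
  | _, [] => True
  | s, m :: l => G.canMove s m ∧ ValidFrom G (G.applyMove s m) l

/-- Last configuration of a finite play. -/
def endConf (G : SPTG) (s : G.Conf) (l : List G.Move) : G.Conf := l.foldl G.applyMove s

/-- Sum of the weights of the discrete transitions taken along a finite play. -/
def transWtSum (G : SPTG) : G.Conf → List G.Move → ℤ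
  | _, [] => 0
  | s, m :: l => G.transWt s.1 m.tgt + transWtSum G (G.applyMove s m) l

/-- Price of a finite play: the accumulated costs of its moves, plus the final cost
function evaluated at the last configuration if its location is final. -/
def finPrice (G : SPTG) : G.Conf → List G.Move → ℝ
  | s, [] => if G.isFin s.1 then G.finalCost s.1 s.2 else 0
  | s, m :: l => G.moveCost s m + finPrice G (G.applyMove s m) l

/-- A strategy of Min: it prescribes a legal move to every finite play ending in a
non-deadlock configuration owned by Min. -/
structure MinStrategy (G : SPTG) where
  move : G.Conf → List G.Move → Option G.Move
  legal : ∀ s l, G.validConf s → G.ValidFrom s l → G.isMin (G.endConf s l).1 →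
    ¬G.deadlock (G.endConf s l) → ∃ m, move s l = some m ∧ G.canMove (G.endConf s l) m

/-- A strategy of Max. -/
structure MaxStrategy (G : SPTG) where
  move : G.Conf → List G.Move → Option G.Move
  legal : ∀ s l, G.validConf s → G.ValidFrom s l → G.isMax (G.endConf s l).1 →
    ¬G.deadlock (G.endConf s l) → ∃ m, move s l = some m ∧ G.canMove (G.endConf s l) m

/-- One step of the play induced by a pair of strategies. -/
def step (G : SPTG) (σmin : MinStrategy G) (σmax : MaxStrategy G) (s : G.Conf)
    (l : List G.Move) : List G.Move :=
  if G.deadlock (G.endConf s l) then l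
  else if G.isMin (G.endConf s l).1 then
    match σmin.move s l with
    | some m => l ++ [m]
    | none => l
  else
    match σmax.move s l with
    | some m => l ++ [m]
    | none => l

/-- The successive finite prefixes of the unique play determined by an initial
configuration and a pair of strategies. -/
def hist (G : SPTG) (σmin : MinStrategy G) (σmax : MaxStrategy G) (s : G.Conf) :
    ℕ → List G.Move
  | 0 => []
  | n + 1 => G.step σmin σmax s (hist G σmin σmax s n)

/-- Price of the completed play determined by an initial configuration and a pair of
strategies: the price of the play if it reaches a final location, `+∞` otherwise. -/
def playCost (G : SPTG) (s : G.Conf) (σmin : MinStrategy G) (σmax : MaxStrategy G) :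
    EReal :=
  if h : ∃ n, G.isFin (G.endConf s (G.hist σmin σmax s n)).1 then
    ((G.finPrice s (G.hist σmin σmax s (Nat.find h)) : ℝ) : EReal)
  else ⊤

/-- Upper value. -/
def upperVal (G : SPTG) (s : G.Conf) : EReal :=
  ⨅ σmin : MinStrategy G, ⨆ σmax : MaxStrategy G, G.playCost s σmin σmax

/-- Lower value. -/
def lowerVal (G : SPTG) (s : G.Conf) : EReal :=
  ⨆ σmax : MaxStrategy G, ⨅ σmin : MinStrategy G, G.playCost s σmin σmax

/-- The value of the game (SPTGs are determined). -/
def val (G : SPTG) (ℓ : G.Loc) (ν : ℝ) : EReal := G.upperVal (ℓ, ν)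

/-- The finite play `(s, l)` is consistent with the Min strategy `σ`. -/
def consistentMin (G : SPTG) (σ : MinStrategy G) (s : G.Conf) (l : List G.Move) : Prop :=
  ∀ (l₁ : List G.Move) (m : G.Move) (l₂ : List G.Move), l = l₁ ++ m :: l₂ →
    G.isMin (G.endConf s l₁).1 → σ.move s l₁ = some m

/-- The finite play `(s, l)` is consistent with the Max strategy `σ`. -/
def consistentMax (G : SPTG) (σ : MaxStrategy G) (s : G.Conf) (l : List G.Move) : Prop :=
  ∀ (l₁ : List G.Move) (m : G.Move) (l₂ : List G.Move), l = l₁ ++ m :: l₂ →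
    G.isMax (G.endConf s l₁).1 → σ.move s l₁ = some m

/-- There is an infinite play from `s` consistent with the Min strategy `σ`. -/
def infConsMin (G : SPTG) (σ : MinStrategy G) (s : G.Conf) : Prop :=
  ∃ ρ : ℕ → G.Move, ∀ n : ℕ,
    G.ValidFrom s (List.ofFn fun i : Fin n => ρ i) ∧
    G.consistentMin σ s (List.ofFn fun i : Fin n => ρ i)

/-- `Cost(s, σ_Min)`: the supremum of the prices of the completed plays from `s`
consistent with `σ_Min` (finite completed plays end in a deadlock; they have price
`+∞` unless they end in a final location; infinite plays have price `+∞`). -/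
def minCost (G : SPTG) (σ : MinStrategy G) (s : G.Conf) : EReal :=
  (⨆ l : { l : List G.Move //
      G.ValidFrom s l ∧ G.consistentMin σ s l ∧ G.deadlock (G.endConf s l) },
    if G.isFin (G.endConf s l.1).1 then ((G.finPrice s l.1 : ℝ) : EReal) else ⊤) ⊔
  (if G.infConsMin σ s then (⊤ : EReal) else ⊥)

/-- `Cost(s, σ_Max)`: the infimum of the prices of the completed plays from `s`
consistent with `σ_Max`. -/
def maxCost (G : SPTG) (σ : MaxStrategy G) (s : G.Conf) : EReal :=
  ⨅ l : { l : List G.Move //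
      G.ValidFrom s l ∧ G.consistentMax σ s l ∧ G.deadlock (G.endConf s l) },
    if G.isFin (G.endConf s l.1).1 then ((G.finPrice s l.1 : ℝ) : EReal) else ⊤

/-- A finite positional (FP-)strategy: a memoryless strategy given by a function `f`
of the current configuration, together with, for each location, finitely many
rational endpoints `0 = ν_0 < ν_1 < ⋯ < ν_k = r` (all belonging to `pts`) such that
on each open interval and at each endpoint the strategy plays the same move, which is
either a fixed transition taken immediately or waiting until the next endpoint and
then taking a fixed transition. -/
structure FPStrategy (G : SPTG) where
  f : G.Conf → Option G.Move
  pts : Finset ℚ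
  zero_mem : (0 : ℚ) ∈ pts
  r_mem : ∃ q ∈ pts, (q : ℝ) = G.r
  pts_range : ∀ q ∈ pts, (0 : ℝ) ≤ (q : ℝ) ∧ (q : ℝ) ≤ G.r
  fp : ∀ ℓ : G.Loc, ∃ (k : ℕ) (ν : ℕ → ℚ) (δ : ℕ → G.Loc),
    (∀ i ≤ k, ν i ∈ pts) ∧ ν 0 = 0 ∧ ((ν k : ℝ) = G.r) ∧ (∀ i < k, ν i < ν (i + 1)) ∧
    (∀ i, 1 ≤ i → i ≤ k →
      (∀ x : ℝ, (ν (i - 1) : ℝ) < x → x < (ν i : ℝ) →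
        f (ℓ, x) = some ⟨0, δ (2 * i - 1)⟩) ∨
      (∀ x : ℝ, (ν (i - 1) : ℝ) < x → x < (ν i : ℝ) →
        f (ℓ, x) = some ⟨(ν i : ℝ) - x, δ (2 * i - 1)⟩)) ∧
    (∀ i < k, f (ℓ, (ν i : ℝ)) = some ⟨0, δ (2 * i)⟩ ∨
      f (ℓ, (ν i : ℝ)) = some ⟨(ν (i + 1) : ℝ) - (ν i : ℝ), δ (2 * i)⟩) ∧
    f (ℓ, (ν k : ℝ)) = some ⟨0, δ (2 * k)⟩

namespace FPStrategy

variable {G : SPTG}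

/-- `|σ| = |Int(σ)|`: the number of intervals (singletons and open intervals)
generated by the points of `σ`. -/
def size (σ : FPStrategy G) : ℕ := 2 * σ.pts.card - 1

/-- `σ` prescribes a legal move wherever Min has to play. -/
def legalMin (σ : FPStrategy G) : Prop :=
  ∀ s : G.Conf, G.validConf s → G.isMin s.1 → ¬G.deadlock s →
    ∃ m, σ.f s = some m ∧ G.canMove s m

/-- `σ` prescribes a legal move wherever Max has to play. -/
def legalMax (σ : FPStrategy G) : Prop :=
  ∀ s : G.Conf, G.validConf s → G.isMax s.1 → ¬G.deadlock s →
    ∃ m, σ.f s = some m ∧ G.canMove s m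

/-- The finite play `(s, l)` is consistent with `σ` viewed as a Min strategy. -/
def consMin (σ : FPStrategy G) (s : G.Conf) (l : List G.Move) : Prop :=
  ∀ (l₁ : List G.Move) (m : G.Move) (l₂ : List G.Move), l = l₁ ++ m :: l₂ →
    G.isMin (G.endConf s l₁).1 → σ.f (G.endConf s l₁) = some m

/-- The finite play `(s, l)` is consistent with `σ` viewed as a Max strategy. -/
def consMax (σ : FPStrategy G) (s : G.Conf) (l : List G.Move) : Prop :=
  ∀ (l₁ : List G.Move) (m : G.Move) (l₂ : List G.Move), l = l₁ ++ m :: l₂ →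
    G.isMax (G.endConf s l₁).1 → σ.f (G.endConf s l₁) = some m

/-- An NC-strategy of Min: an FP-strategy such that along every cycle consistent
with it whose endpoints have clock values in the same interval of `Int(σ)`, the sum
of the weights of the discrete transitions is at most `-1`. -/
def isNC (σ : FPStrategy G) : Prop :=
  σ.legalMin ∧
  ∀ (ℓ : G.Loc) (ν : ℝ) (l : List G.Move), l ≠ [] →
    G.ValidFrom (ℓ, ν) l → σ.consMin (ℓ, ν) l → (G.endConf (ℓ, ν) l).1 = ℓ →
    sameInt σ.pts ν (G.endConf (ℓ, ν) l).2 → G.transWtSum (ℓ, ν) l ≤ -1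

/-- The fake value of `σ` from `s`: the supremum of the prices of the plays from `s`
consistent with `σ` that reach a final location (`sup ∅ = -∞`). -/
def fakeVal (σ : FPStrategy G) (s : G.Conf) : EReal :=
  ⨆ l : { l : List G.Move //
      G.ValidFrom s l ∧ σ.consMin s l ∧ G.isFin (G.endConf s l).1 },
    ((G.finPrice s l.1 : ℝ) : EReal)

/-- `Cost(s, σ)` for `σ` viewed as a Max strategy. -/
def maxCost (σ : FPStrategy G) (s : G.Conf) : EReal :=
  ⨅ l : { l : List G.Move //
      G.ValidFrom s l ∧ σ.consMax s l ∧ G.deadlock (G.endConf s l) },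
    if G.isFin (G.endConf s l.1).1 then ((G.finPrice s l.1 : ℝ) : EReal) else ⊤

end FPStrategy

/-- `w_T`: the largest absolute value of a transition weight. -/
def wT (G : SPTG) : ℝ :=
  ⨆ p : G.Loc × G.Loc, if G.trans p.1 p.2 then |(G.transWt p.1 p.2 : ℝ)| else 0

/-- `w_L`: the largest absolute value of a (non-final) location weight. -/
def wL (G : SPTG) : ℝ :=
  ⨆ ℓ : G.Loc, if G.isFin ℓ then 0 else |(G.locWt ℓ : ℝ)|

/-- `w_F`: the largest absolute value of a final cost function on `[0,r]`. -/
def wF (G : SPTG) : ℝ :=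
  ⨆ ℓ : G.Loc, if G.isFin ℓ then max |G.finalCost ℓ 0| |G.finalCost ℓ G.r| else 0

/-- Slope of the value function of location `ℓ` between clock values `ν₁` and `ν₂`. -/
def slope (G : SPTG) (ℓ : G.Loc) (ν₁ ν₂ : ℝ) : ℝ :=
  ((G.val ℓ ν₂).toReal - (G.val ℓ ν₁).toReal) / (ν₂ - ν₁)

/-- A game is finitely optimal if Min has a fake-optimal NC-strategy, Max has an
optimal FP-strategy, and all value functions are cost functions. -/
def finitelyOptimal (G : SPTG) : Prop :=
  (∃ σ : FPStrategy G, σ.isNC ∧ ∀ s : G.Conf, G.validConf s → σ.fakeVal s = G.val s.1 s.2) ∧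
  (∃ σ : FPStrategy G, σ.legalMax ∧ ∀ s : G.Conf, G.validConf s → σ.maxCost s = G.val s.1 s.2) ∧
  ∀ ℓ : G.Loc, CostFunctionOn (G.val ℓ) 0 G.r

end SPTG

namespace UrgentFG
open SPTG

/-! ### EReal helpers -/

lemma coe_add_cancel (w : ℝ) (x : EReal) : (w:EReal) + ((-w:ℝ) + x) = x := by
  induction x using EReal.rec
  · simp
  · rw [← EReal.coe_add, ← EReal.coe_add]; norm_num
  · simp

lemma coe_add_assoc (a b : ℝ) (x : EReal) : (a:EReal) + ((b:EReal) + x) = ((a+b:ℝ):EReal) + x := by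
  induction x using EReal.rec
  · simp
  · rw [← EReal.coe_add, ← EReal.coe_add, ← EReal.coe_add]; ring_nf
  · simp

lemma coe_add_iInf (w : ℝ) (f : ℕ → EReal) : (w:EReal) + (⨅ i, f i) = ⨅ i, ((w:EReal) + f i) := by
  refine le_antisymm (le_iInf fun i => add_le_add_right (iInf_le _ i) _) ?_
  have key : ∀ x : EReal, ((-w:ℝ):EReal) + ((w:EReal) + x) = x := by
    intro x
    rw [coe_add_assoc]
    norm_num
  have h : ∀ i, ((-w:ℝ):EReal) + (⨅ j, ((w:EReal) + f j)) ≤ f i := by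
    intro i
    calc ((-w:ℝ):EReal) + (⨅ j, ((w:EReal) + f j)) ≤ ((-w:ℝ):EReal) + ((w:EReal) + f i) :=
          add_le_add_right (iInf_le _ i) _
      _ = f i := key _
  have h2 : ((-w:ℝ):EReal) + (⨅ j, ((w:EReal) + f j)) ≤ ⨅ i, f i := le_iInf h
  calc (⨅ j, ((w:EReal) + f j)) = (w:EReal) + (((-w:ℝ):EReal) + (⨅ j, ((w:EReal) + f j))) :=
        (coe_add_cancel w _).symm
    _ ≤ (w:EReal) + ⨅ i, f i := add_le_add_right h2 _

lemma real_add_lt_top (a : ℝ) (x : EReal) (h : (a:EReal) + x ≠ ⊤) : x ≠ ⊤ := by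
  intro hx; rw [hx] at h; exact h (by simp [EReal.add_top_of_ne_bot])

/-- inf over ℕ of finite sups of antitone families equals sup of infs (≤ direction). -/
lemma iInf_sup'_le {α : Type*} (s : Finset α) (hs : s.Nonempty) (f : ℕ → α → EReal)
    (hf : ∀ a, Antitone (fun m => f m a)) :
    (⨅ m, s.sup' hs (f m)) ≤ s.sup' hs (fun a => ⨅ m, f m a) := by
  by_contra h
  push_neg at h
  set A := ⨅ m, s.sup' hs (f m) with hA
  have hlt : ∀ a ∈ s, ∃ m, f m a < A := by
    intro a ha
    have : (⨅ m, f m a) < A := lt_of_le_of_lt (Finset.le_sup' (fun a => ⨅ m, f m a) ha) h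
    exact iInf_lt_iff.mp this
  choose ms hms using hlt
  classical
  set M : ℕ := s.sup' hs (fun a => if ha : a ∈ s then ms a ha else 0) with hM
  have hall : ∀ a ∈ s, f M a < A := by
    intro a ha
    have h1 : ms a ha ≤ M := by
      have := Finset.le_sup' (fun a => if ha : a ∈ s then ms a ha else 0) ha
      rw [dif_pos ha] at this
      exact this
    exact lt_of_le_of_lt (hf a h1) (hms a ha)
  have hsup : s.sup' hs (f M) < A := (Finset.sup'_lt_iff hs).mpr hall
  exact absurd (iInf_le (fun m => s.sup' hs (f m)) M) (not_le.mpr hsup)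


/-! ### Value iteration -/

variable (G : SPTG) (ν : ℝ)

/-- Successors of a location. -/
def succ (ℓ : G.Loc) : Finset G.Loc := Finset.univ.filter (fun ℓ' => G.trans ℓ ℓ')

lemma mem_succ {ℓ ℓ' : G.Loc} : ℓ' ∈ succ G ℓ ↔ G.trans ℓ ℓ' := by
  simp [succ]

/-- Final cost at clock value `ν`, as an `EReal`. -/
def cf (ℓ : G.Loc) : EReal := ((G.finalCost ℓ ν : ℝ) : EReal)

/-- One step of value iteration. -/
def Phi (f : G.Loc → EReal) (ℓ : G.Loc) : EReal :=
  if G.isFin ℓ then cf G ν ℓ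
  else if h : (succ G ℓ).Nonempty then
    (if G.isMin ℓ then (succ G ℓ).inf' h (fun ℓ' => (((G.transWt ℓ ℓ' : ℝ)):EReal) + f ℓ')
     else (succ G ℓ).sup' h (fun ℓ' => (((G.transWt ℓ ℓ' : ℝ)):EReal) + f ℓ'))
  else ⊤

/-- Iterates of value iteration from `⊤`. -/
def U : ℕ → G.Loc → EReal
  | 0 => fun ℓ => if G.isFin ℓ then cf G ν ℓ else ⊤
  | m+1 => Phi G ν (U m)

/-- The limit of value iteration. -/
def V (ℓ : G.Loc) : EReal := ⨅ m, U G ν m ℓ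

lemma inf'_mono_fun' {α β : Type*} [SemilatticeInf α] {s : Finset β} (hs : s.Nonempty)
    {f g : β → α} (h : ∀ b ∈ s, f b ≤ g b) : s.inf' hs f ≤ s.inf' hs g :=
  Finset.le_inf' _ _ fun b hb => (Finset.inf'_le_of_le _ hb (h b hb))

lemma Phi_mono {f g : G.Loc → EReal} (h : ∀ ℓ, f ℓ ≤ g ℓ) (ℓ : G.Loc) :
    Phi G ν f ℓ ≤ Phi G ν g ℓ := by
  unfold Phi
  split
  · exact le_refl _
  · split
    · split
      · exact inf'_mono_fun' _ (fun ℓ' _ => add_le_add_right (h ℓ') _)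
      · exact Finset.sup'_mono_fun (fun ℓ' _ => add_le_add_right (h ℓ') _)
    · exact le_refl _

lemma U_antitone_step (m : ℕ) (ℓ : G.Loc) : U G ν (m+1) ℓ ≤ U G ν m ℓ := by
  induction m generalizing ℓ with
  | zero =>
    show Phi G ν (U G ν 0) ℓ ≤ _
    unfold Phi
    split
    · simp [U]; split <;> simp_all
    · simp only [U]; rw [if_neg (by assumption)]; split <;> [skip; exact le_refl _]
      exact le_top
  | succ m ih => exact Phi_mono G ν ih ℓ

lemma U_antitone (ℓ : G.Loc) : Antitone (fun m => U G ν m ℓ) :=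
  antitone_nat_of_succ_le (fun m => U_antitone_step G ν m ℓ)

lemma U_fin (m : ℕ) {ℓ : G.Loc} (h : G.isFin ℓ) : U G ν m ℓ = cf G ν ℓ := by
  cases m with
  | zero => simp [U, h]
  | succ m => simp [U, Phi, h]

lemma V_le_U (m : ℕ) (ℓ : G.Loc) : V G ν ℓ ≤ U G ν m ℓ := iInf_le _ m

lemma V_fin {ℓ : G.Loc} (h : G.isFin ℓ) : V G ν ℓ = cf G ν ℓ := by
  unfold V
  simp [fun m => U_fin G ν m h]

lemma U_zero_nonfin {ℓ : G.Loc} (h : ¬ G.isFin ℓ) : U G ν 0 ℓ = ⊤ := by simp [U, h]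

lemma U_succ_min {ℓ : G.Loc} (hnf : ¬ G.isFin ℓ) (hmin : G.isMin ℓ) (m : ℕ)
    (h : (succ G ℓ).Nonempty) :
    U G ν (m+1) ℓ = (succ G ℓ).inf' h (fun ℓ' => (((G.transWt ℓ ℓ' : ℝ)):EReal) + U G ν m ℓ') := by
  simp [U, Phi, hnf, hmin, h]

lemma U_succ_max {ℓ : G.Loc} (hnf : ¬ G.isFin ℓ) (hmax : ¬ G.isMin ℓ) (m : ℕ)
    (h : (succ G ℓ).Nonempty) :
    U G ν (m+1) ℓ = (succ G ℓ).sup' h (fun ℓ' => (((G.transWt ℓ ℓ' : ℝ)):EReal) + U G ν m ℓ') := by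
  simp [U, Phi, hnf, hmax, h]

lemma U_succ_dead {ℓ : G.Loc} (hnf : ¬ G.isFin ℓ) (m : ℕ) (h : ¬ (succ G ℓ).Nonempty) :
    U G ν (m+1) ℓ = ⊤ := by
  simp [U, Phi, hnf, h]

/-- At a Min location, `V` is below each transition. -/
lemma V_min_le {ℓ ℓ' : G.Loc} (hnf : ¬ G.isFin ℓ) (hmin : G.isMin ℓ) (ht : G.trans ℓ ℓ') :
    V G ν ℓ ≤ (((G.transWt ℓ ℓ' : ℝ)):EReal) + V G ν ℓ' := by
  have h : (succ G ℓ).Nonempty := ⟨ℓ', (mem_succ G).mpr ht⟩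
  have step : ∀ m, V G ν ℓ ≤ (((G.transWt ℓ ℓ' : ℝ)):EReal) + U G ν m ℓ' := by
    intro m
    calc V G ν ℓ ≤ U G ν (m+1) ℓ := V_le_U G ν (m+1) ℓ
      _ ≤ _ := by
          rw [U_succ_min G ν hnf hmin m h]
          exact Finset.inf'_le _ ((mem_succ G).mpr ht)
  calc V G ν ℓ ≤ ⨅ m, ((((G.transWt ℓ ℓ' : ℝ)):EReal) + U G ν m ℓ') := le_iInf step
    _ = _ := (coe_add_iInf _ _).symm

/-- At a Max location, `V` is the max over transitions. -/
lemma V_max_eq {ℓ : G.Loc} (hnf : ¬ G.isFin ℓ) (hmax : ¬ G.isMin ℓ)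
    (h : (succ G ℓ).Nonempty) :
    V G ν ℓ = (succ G ℓ).sup' h (fun ℓ' => (((G.transWt ℓ ℓ' : ℝ)):EReal) + V G ν ℓ') := by
  refine le_antisymm ?_ ?_
  · have h1 : V G ν ℓ ≤ ⨅ m, U G ν (m+1) ℓ := le_iInf fun m => V_le_U G ν (m+1) ℓ
    have h2 : (⨅ m, U G ν (m+1) ℓ) ≤
        (succ G ℓ).sup' h (fun ℓ' => (((G.transWt ℓ ℓ' : ℝ)):EReal) + V G ν ℓ') := by
      have := iInf_sup'_le (succ G ℓ) h
        (fun m ℓ' => (((G.transWt ℓ ℓ' : ℝ)):EReal) + U G ν m ℓ')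
        (fun ℓ' m₁ m₂ hm => add_le_add_right (U_antitone G ν ℓ' hm) _)
      calc (⨅ m, U G ν (m+1) ℓ)
          = ⨅ m, (succ G ℓ).sup' h (fun ℓ' => (((G.transWt ℓ ℓ' : ℝ)):EReal) + U G ν m ℓ') := by
            exact iInf_congr (fun m => U_succ_max G ν hnf hmax m h)
        _ ≤ (succ G ℓ).sup' h (fun ℓ' => ⨅ m, ((((G.transWt ℓ ℓ' : ℝ)):EReal) + U G ν m ℓ')) :=
            this
        _ = _ := by
            refine Finset.sup'_congr h rfl (fun ℓ' _ => ?_)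
            rw [← coe_add_iInf]
            rfl
    exact h1.trans h2
  · rw [Finset.sup'_le_iff]
    intro ℓ' hℓ'
    refine le_iInf fun m => ?_
    cases m with
    | zero => rw [U_zero_nonfin G ν hnf]; exact le_top
    | succ m =>
      rw [U_succ_max G ν hnf hmax m h]
      exact le_trans (add_le_add_right (V_le_U G ν m ℓ') _)
        (Finset.le_sup' (fun ℓ' => (((G.transWt ℓ ℓ' : ℝ)):EReal) + U G ν m ℓ') hℓ')


/-! ### Discreteness and stabilization -/

/-- The discrete set of possible values. -/
def D : Set EReal :=
  {x | x = ⊤ ∨ ∃ (k : ℤ) (ℓ' : G.Loc), G.isFin ℓ' ∧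
    x = (((k : ℝ) + G.finalCost ℓ' ν : ℝ) : EReal)}

lemma cf_mem_D {ℓ : G.Loc} (h : G.isFin ℓ) : cf G ν ℓ ∈ D G ν := by
  refine Or.inr ⟨0, ℓ, h, ?_⟩
  simp [cf]

lemma add_mem_D (k : ℤ) {x : EReal} (hx : x ∈ D G ν) :
    ((k : ℝ) : EReal) + x ∈ D G ν := by
  rcases hx with h | ⟨k', ℓ', hf, h⟩
  · subst h
    exact Or.inl (by
      rw [EReal.add_top_of_ne_bot]
      exact EReal.coe_ne_bot _)
  · subst h
    refine Or.inr ⟨k + k', ℓ', hf, ?_⟩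
    rw [← EReal.coe_add]
    congr 1
    push_cast
    ring

lemma U_mem_D (m : ℕ) (ℓ : G.Loc) : U G ν m ℓ ∈ D G ν := by
  induction m generalizing ℓ with
  | zero =>
    by_cases h : G.isFin ℓ
    · rw [U_fin G ν 0 h]; exact cf_mem_D G ν h
    · rw [U_zero_nonfin G ν h]; exact Or.inl rfl
  | succ m ih =>
    by_cases h : G.isFin ℓ
    · rw [U_fin G ν _ h]; exact cf_mem_D G ν h
    · by_cases hne : (succ G ℓ).Nonempty
      · by_cases hmin : G.isMin ℓ
        · rw [U_succ_min G ν h hmin m hne]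
          obtain ⟨b, hb, heq⟩ := Finset.exists_mem_eq_inf' hne
            (fun ℓ' => (((G.transWt ℓ ℓ' : ℝ)):EReal) + U G ν m ℓ')
          rw [heq]
          exact add_mem_D G ν _ (ih b)
        · rw [U_succ_max G ν h hmin m hne]
          obtain ⟨b, hb, heq⟩ := Finset.exists_mem_eq_sup' hne
            (fun ℓ' => (((G.transWt ℓ ℓ' : ℝ)):EReal) + U G ν m ℓ')
          rw [heq]
          exact add_mem_D G ν _ (ih b)
      · rw [U_succ_dead G ν h m hne]; exact Or.inl rfl

lemma stab (u : ℕ → EReal) (hu : Antitone u) (hD : ∀ m, u m ∈ D G ν) (v : ℝ)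
    (hv : (⨅ m, u m) = ((v : ℝ) : EReal)) : ∃ M, u M = ((v : ℝ) : EReal) := by
  have h0 : ∀ m, ((v:ℝ):EReal) ≤ u m := fun m => hv ▸ iInf_le u m
  have h1 : (⨅ m, u m) < ((v + 1 : ℝ) : EReal) := by
    rw [hv]; exact_mod_cast (by linarith : v < v + 1)
  obtain ⟨m₀, hm₀⟩ := iInf_lt_iff.mp h1
  -- every u (m₀ + j) is a real number in [v, v+1)
  have hreal : ∀ j, u (m₀ + j) = (((u (m₀ + j)).toReal : ℝ) : EReal) := by
    intro j
    have hub : u (m₀ + j) < ((v + 1 : ℝ) : EReal) :=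
      lt_of_le_of_lt (hu (Nat.le_add_right m₀ j)) hm₀
    have hnt : u (m₀ + j) ≠ ⊤ := ne_top_of_lt hub
    have hnb : u (m₀ + j) ≠ ⊥ := by
      intro hbot
      have := h0 (m₀ + j)
      rw [hbot] at this
      exact absurd this (by simp)
    exact (EReal.coe_toReal hnt hnb).symm
  set g : ℕ → ℝ := fun j => (u (m₀ + j)).toReal with hg
  have hgS : ∀ j, ∃ ℓ' : G.Loc, G.isFin ℓ' ∧
      g j = ((⌈v - G.finalCost ℓ' ν⌉ : ℝ) + G.finalCost ℓ' ν) := by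
    intro j
    rcases hD (m₀ + j) with h | ⟨k, ℓ', hf, h⟩
    · exact absurd h (ne_top_of_lt (lt_of_le_of_lt (hu (Nat.le_add_right m₀ j)) hm₀))
    · refine ⟨ℓ', hf, ?_⟩
      have hx : g j = (k : ℝ) + G.finalCost ℓ' ν := by
        show (u (m₀ + j)).toReal = _
        rw [h, EReal.toReal_coe]
      have hlow : v ≤ (k : ℝ) + G.finalCost ℓ' ν := by
        have := h0 (m₀ + j)
        rw [h] at this
        exact_mod_cast this
      have hhigh : (k : ℝ) + G.finalCost ℓ' ν < v + 1 := by
        have : u (m₀ + j) < ((v + 1 : ℝ) : EReal) :=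
          lt_of_le_of_lt (hu (Nat.le_add_right m₀ j)) hm₀
        rw [h] at this
        exact_mod_cast this
      have hk : k = ⌈v - G.finalCost ℓ' ν⌉ := by
        symm
        rw [Int.ceil_eq_iff]
        constructor <;> push_cast <;> linarith
      rw [hx, hk]
  -- the range of g is finite
  have hTfin : (Set.range g).Finite := by
    have : Set.range g ⊆
        (fun ℓ' : G.Loc => ((⌈v - G.finalCost ℓ' ν⌉ : ℝ) + G.finalCost ℓ' ν)) '' Set.univ := by
      rintro x ⟨j, rfl⟩
      obtain ⟨ℓ', _, hℓ'⟩ := hgS j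
      exact ⟨ℓ', Set.mem_univ _, hℓ'.symm⟩
    exact Set.Finite.subset (Set.finite_univ.image _) this
  have hTne : (Set.range g).Nonempty := ⟨g 0, 0, rfl⟩
  obtain ⟨x₀, hx₀mem, hx₀min⟩ := Set.exists_min_image (Set.range g) id hTfin hTne
  obtain ⟨m₁, hm₁⟩ := hx₀mem
  refine ⟨m₀ + m₁, le_antisymm ?_ (h0 _)⟩
  have hle : ∀ m, u (m₀ + m₁) ≤ u m := by
    intro m
    have key : ∀ j, u (m₀ + m₁) ≤ u (m₀ + j) := by
      intro j
      have hx : g m₁ ≤ g j := by rw [hm₁]; exact hx₀min (g j) ⟨j, rfl⟩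
      rw [hreal m₁, hreal j]
      exact EReal.coe_le_coe_iff.mpr hx
    rcases le_or_gt m₀ m with hm | hm
    · obtain ⟨j, rfl⟩ := Nat.exists_eq_add_of_le hm
      exact key j
    · calc u (m₀ + m₁) ≤ u (m₀ + 0) := key 0
        _ ≤ u m := by rw [Nat.add_zero]; exact hu hm.le
  rw [← hv]
  exact le_iInf hle


/-! ### Play plumbing -/

lemma endConf_nil (s : G.Conf) : G.endConf s [] = s := rfl

lemma endConf_cons (s : G.Conf) (m : G.Move) (l : List G.Move) :
    G.endConf s (m :: l) = G.endConf (G.applyMove s m) l := rfl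

lemma endConf_append (s : G.Conf) (x y : List G.Move) :
    G.endConf s (x ++ y) = G.endConf (G.endConf s x) y := List.foldl_append

lemma validFrom_append (s : G.Conf) (x y : List G.Move) :
    G.ValidFrom s (x ++ y) ↔ G.ValidFrom s x ∧ G.ValidFrom (G.endConf s x) y := by
  induction x generalizing s with
  | nil => simp [SPTG.ValidFrom, endConf_nil]
  | cons m t ih =>
    simp only [List.cons_append, SPTG.ValidFrom, endConf_cons, List.append_eq, ih, and_assoc]

lemma transWtSum_append (s : G.Conf) (x y : List G.Move) :
    G.transWtSum s (x ++ y) = G.transWtSum s x + G.transWtSum (G.endConf s x) y := by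
  induction x generalizing s with
  | nil => simp [SPTG.transWtSum, endConf_nil]
  | cons m t ih =>
    simp only [List.cons_append, SPTG.transWtSum, endConf_cons, List.append_eq, ih]
    ring

section Urgent

variable {hurg : ∀ ℓ : G.Loc, ¬G.isFin ℓ → G.isUrg ℓ}

lemma move_t_zero (hurg : ∀ ℓ : G.Loc, ¬G.isFin ℓ → G.isUrg ℓ) {s : G.Conf} {m : G.Move} (h : G.canMove s m) : m.t = 0 :=
  h.2.2.2 (hurg _ (G.trans_not_fin _ _ h.2.2.1))

lemma clock_const (hurg : ∀ ℓ : G.Loc, ¬G.isFin ℓ → G.isUrg ℓ) {s : G.Conf} {l : List G.Move} (h : G.ValidFrom s l) :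
    (G.endConf s l).2 = s.2 := by
  induction l generalizing s with
  | nil => rfl
  | cons m t ih =>
    rw [endConf_cons]
    rw [ih h.2]
    show s.2 + m.t = s.2
    rw [move_t_zero G hurg h.1, add_zero]

lemma finPrice_eq (hurg : ∀ ℓ : G.Loc, ¬G.isFin ℓ → G.isUrg ℓ) {s : G.Conf} {l : List G.Move} (h : G.ValidFrom s l) :
    G.finPrice s l = (G.transWtSum s l : ℝ) +
      (if G.isFin (G.endConf s l).1 then G.finalCost (G.endConf s l).1 s.2 else 0) := by
  induction l generalizing s with
  | nil => simp [SPTG.finPrice, SPTG.transWtSum, endConf_nil]; exact if_congr Iff.rfl rfl rfl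
  | cons m t ih =>
    have ht : m.t = 0 := move_t_zero G hurg h.1
    have hclock : (G.applyMove s m).2 = s.2 := by
      show s.2 + m.t = s.2
      rw [ht, add_zero]
    simp only [SPTG.finPrice, SPTG.transWtSum, endConf_cons, ih h.2, SPTG.moveCost, ht,
      hclock]
    push_cast
    split_ifs with hc <;> simp [hc] <;> ring

lemma not_deadlock_iff {s : G.Conf} (hs : s.2 ≤ G.r) :
    ¬ G.deadlock s ↔ (succ G s.1).Nonempty := by
  constructor
  · intro h
    rw [SPTG.deadlock, not_not] at h
    obtain ⟨m, hm⟩ := h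
    exact ⟨m.tgt, (mem_succ G).mpr hm.2.2.1⟩
  · rintro ⟨ℓ', hℓ'⟩ hd
    exact hd ⟨⟨0, ℓ'⟩, le_refl 0, by rw [add_zero]; exact hs, (mem_succ G).mp hℓ', fun _ => rfl⟩

lemma fin_deadlock {s : G.Conf} (h : G.isFin s.1) : G.deadlock s := by
  rintro ⟨m, hm⟩
  exact G.trans_not_fin _ _ hm.2.2.1 h

lemma isMax_of {ℓ : G.Loc} (h1 : ¬ G.isFin ℓ) (h2 : ¬ G.isMin ℓ) : G.isMax ℓ := by
  rcases G.partition ℓ with ⟨h, _, _⟩ | ⟨_, h, _⟩ | ⟨_, _, h⟩ <;> tauto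

lemma notMin_of_isMax {ℓ : G.Loc} (h : G.isMax ℓ) : ¬ G.isMin ℓ := by
  rcases G.partition ℓ with ⟨_, h', _⟩ | ⟨h', _, _⟩ | ⟨_, _, _⟩ <;> tauto

lemma notFin_of_isMax {ℓ : G.Loc} (h : G.isMax ℓ) : ¬ G.isFin ℓ := by
  rcases G.partition ℓ with ⟨_, _, h'⟩ | ⟨_, _, h'⟩ | ⟨_, h', _⟩ <;> tauto

lemma notFin_of_isMin {ℓ : G.Loc} (h : G.isMin ℓ) : ¬ G.isFin ℓ := by
  rcases G.partition ℓ with ⟨_, _, h'⟩ | ⟨h', _, _⟩ | ⟨h', _, _⟩ <;> tauto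

end Urgent


/-! ### The two strategies -/

/-- A transition target attaining the minimum of `w + U j` among successors. -/
def aminD (j : ℕ) (ℓ : G.Loc) (h : (succ G ℓ).Nonempty) : G.Loc :=
  (Finset.exists_mem_eq_inf' h
    (fun ℓ' => (((G.transWt ℓ ℓ' : ℝ)):EReal) + U G ν j ℓ')).choose

lemma aminD_mem (j : ℕ) (ℓ : G.Loc) (h : (succ G ℓ).Nonempty) :
    aminD G ν j ℓ h ∈ succ G ℓ :=
  (Finset.exists_mem_eq_inf' h _).choose_spec.1

lemma aminD_spec (j : ℕ) (ℓ : G.Loc) (h : (succ G ℓ).Nonempty) :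
    (succ G ℓ).inf' h (fun ℓ' => (((G.transWt ℓ ℓ' : ℝ)):EReal) + U G ν j ℓ') =
      (((G.transWt ℓ (aminD G ν j ℓ h) : ℝ)):EReal) + U G ν j (aminD G ν j ℓ h) :=
  (Finset.exists_mem_eq_inf' h _).choose_spec.2

/-- A transition target attaining the maximum of `w + V` among successors. -/
def amaxV (ℓ : G.Loc) (h : (succ G ℓ).Nonempty) : G.Loc :=
  (Finset.exists_mem_eq_sup' h
    (fun ℓ' => (((G.transWt ℓ ℓ' : ℝ)):EReal) + V G ν ℓ')).choose

lemma amaxV_mem (ℓ : G.Loc) (h : (succ G ℓ).Nonempty) : amaxV G ν ℓ h ∈ succ G ℓ :=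
  (Finset.exists_mem_eq_sup' h _).choose_spec.1

lemma amaxV_spec (ℓ : G.Loc) (h : (succ G ℓ).Nonempty) :
    (succ G ℓ).sup' h (fun ℓ' => (((G.transWt ℓ ℓ' : ℝ)):EReal) + V G ν ℓ') =
      (((G.transWt ℓ (amaxV G ν ℓ h) : ℝ)):EReal) + V G ν (amaxV G ν ℓ h) :=
  (Finset.exists_mem_eq_sup' h _).choose_spec.2

/-- The positional choice function of Max. -/
def maxFun (conf : G.Conf) : Option G.Move :=
  if h : (succ G conf.1).Nonempty then some ⟨0, amaxV G ν conf.1 h⟩ else none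

/-- Max's positional strategy built from `V`. -/
def sigmaMax (hurg : ∀ ℓ : G.Loc, ¬G.isFin ℓ → G.isUrg ℓ) : G.MaxStrategy where
  move s l := maxFun G ν (G.endConf s l)
  legal s l hs hv _ hnd := by
    have h2 : (G.endConf s l).2 = s.2 := clock_const G hurg hv
    have hne : (succ G (G.endConf s l).1).Nonempty :=
      (not_deadlock_iff G (h2 ▸ hs.2)).mp hnd
    refine ⟨⟨0, amaxV G ν (G.endConf s l).1 hne⟩, by simp [maxFun, hne], le_refl 0, ?_, ?_, ?_⟩
    · rw [add_zero]; exact h2 ▸ hs.2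
    · exact (mem_succ G).mp (amaxV_mem G ν _ hne)
    · intro _; rfl

/-- Min's strategy with horizon `M` built from value iteration. -/
def sigmaMin (M : ℕ) (hurg : ∀ ℓ : G.Loc, ¬G.isFin ℓ → G.isUrg ℓ) : G.MinStrategy where
  move s l :=
    if h : (succ G (G.endConf s l).1).Nonempty then
      some ⟨0, aminD G ν (M - (l.length + 1)) (G.endConf s l).1 h⟩
    else none
  legal s l hs hv _ hnd := by
    have h2 : (G.endConf s l).2 = s.2 := clock_const G hurg hv
    have hne : (succ G (G.endConf s l).1).Nonempty :=
      (not_deadlock_iff G (h2 ▸ hs.2)).mp hnd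
    refine ⟨⟨0, aminD G ν (M - (l.length + 1)) (G.endConf s l).1 hne⟩,
      by simp [hne], le_refl 0, ?_, ?_, ?_⟩
    · rw [add_zero]; exact h2 ▸ hs.2
    · exact (mem_succ G).mp (aminD_mem G ν _ _ hne)
    · intro _; rfl

/-- The play is consistent with Max's positional strategy. -/
def MaxCons (s : G.Conf) (l : List G.Move) : Prop :=
  ∀ (l₁ : List G.Move) (m : G.Move) (l₂ : List G.Move), l = l₁ ++ m :: l₂ →
    G.isMax (G.endConf s l₁).1 → some m = maxFun G ν (G.endConf s l₁)

lemma maxCons_nil (s : G.Conf) : MaxCons G ν s [] := by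
  intro l₁ m l₂ h
  exact absurd h (by simp)

lemma maxCons_cons {s : G.Conf} {m : G.Move} {l : List G.Move} (h : MaxCons G ν s (m :: l)) :
    MaxCons G ν (G.applyMove s m) l := by
  intro l₁ m' l₂ hdec hmax
  have := h (m :: l₁) m' l₂ (by rw [hdec]; rfl) (by rw [endConf_cons]; exact hmax)
  rwa [endConf_cons] at this

lemma maxCons_head {s : G.Conf} {m : G.Move} {l : List G.Move} (h : MaxCons G ν s (m :: l))
    (hmax : G.isMax s.1) : some m = maxFun G ν s :=
  h [] m l rfl hmax

/-- Key lower bound: any final play consistent with Max's positional strategy has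
price at least `V`. -/
lemma maxCons_lower (hurg : ∀ ℓ : G.Loc, ¬G.isFin ℓ → G.isUrg ℓ) :
    ∀ (l : List G.Move) (s : G.Conf), s.2 = ν → G.ValidFrom s l → MaxCons G ν s l →
      G.isFin (G.endConf s l).1 →
      V G ν s.1 ≤ ((G.transWtSum s l : ℝ) : EReal) + cf G ν (G.endConf s l).1 := by
  intro l
  induction l with
  | nil =>
    intro s hs _ _ hfin
    rw [endConf_nil] at hfin ⊢
    rw [V_fin G ν hfin]
    simp [SPTG.transWtSum]
  | cons m t ih =>
    intro s hs hv hcons hfin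
    have hcm : G.canMove s m := hv.1
    have htr : G.trans s.1 m.tgt := hcm.2.2.1
    have hnf : ¬ G.isFin s.1 := G.trans_not_fin _ _ htr
    have hs' : (G.applyMove s m).2 = ν := by
      show s.2 + m.t = ν
      rw [move_t_zero G hurg hcm, add_zero, hs]
    have hrest := ih (G.applyMove s m) hs' hv.2 (maxCons_cons G ν hcons)
      (by rwa [endConf_cons] at hfin)
    have hsum : (G.transWtSum s (m :: t) : ℝ) =
        (G.transWt s.1 m.tgt : ℝ) + (G.transWtSum (G.applyMove s m) t : ℝ) := by
      show ((G.transWt s.1 m.tgt + G.transWtSum (G.applyMove s m) t : ℤ) : ℝ) = _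
      push_cast
      ring
    have key : V G ν s.1 ≤ (((G.transWt s.1 m.tgt : ℝ)):EReal) + V G ν m.tgt := by
      by_cases hmin : G.isMin s.1
      · exact V_min_le G ν hnf hmin htr
      · have hmax : G.isMax s.1 := isMax_of G hnf hmin
        have hne : (succ G s.1).Nonempty := ⟨m.tgt, (mem_succ G).mpr htr⟩
        have hm := maxCons_head G ν hcons hmax
        rw [maxFun, dif_pos hne] at hm
        have hmtgt : m.tgt = amaxV G ν s.1 hne := by
          have := Option.some_injective _ hm
          rw [this]
        rw [V_max_eq G ν hnf hmin hne, amaxV_spec G ν s.1 hne, hmtgt]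
    calc V G ν s.1 ≤ (((G.transWt s.1 m.tgt : ℝ)):EReal) + V G ν m.tgt := key
      _ ≤ (((G.transWt s.1 m.tgt : ℝ)):EReal) +
          (((G.transWtSum (G.applyMove s m) t : ℝ) : EReal) + cf G ν (G.endConf s (m :: t)).1) := by
          rw [endConf_cons]
          exact add_le_add_right hrest _
      _ = _ := by
          rw [coe_add_assoc, ← hsum]


lemma notMax_of_isMin {ℓ : G.Loc} (h : G.isMin ℓ) : ¬ G.isMax ℓ := by
  rcases G.partition ℓ with ⟨_, h', _⟩ | ⟨h', _, _⟩ | ⟨h', _, _⟩ <;> tauto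

lemma snoc_decomp {α : Type*} (l l₁ l₂ : List α) (m m' : α) (h : l ++ [m] = l₁ ++ m' :: l₂) :
    (l₁ = l ∧ m' = m ∧ l₂ = []) ∨ ∃ l₂', l = l₁ ++ m' :: l₂' ∧ l₂ = l₂' ++ [m] := by
  rcases List.eq_nil_or_concat l₂ with rfl | ⟨t, x, rfl⟩
  · left
    have := List.append_inj' h rfl
    exact ⟨this.1.symm, (List.cons.injEq .. ▸ this.2).1.symm, rfl⟩
  · right
    have h2 : l ++ [m] = (l₁ ++ m' :: t) ++ [x] := by simp [h]
    have h3 := List.append_inj' h2 rfl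
    have hx : x = m := ((List.cons.injEq .. ▸ h3.2).1).symm
    exact ⟨t, h3.1, by rw [List.concat_eq_append, hx]⟩

lemma maxCons_snoc {s : G.Conf} {l : List G.Move} {m : G.Move} (h : MaxCons G ν s l)
    (hm : G.isMax (G.endConf s l).1 → some m = maxFun G ν (G.endConf s l)) :
    MaxCons G ν s (l ++ [m]) := by
  intro l₁ m' l₂ hdec hmax
  rcases snoc_decomp l l₁ l₂ m m' hdec with ⟨rfl, rfl, rfl⟩ | ⟨l₂', rfl, rfl⟩
  · exact hm hmax
  · exact h l₁ m' l₂' rfl hmax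

/-- Validity of the history of a play. -/
lemma hist_valid (hurg : ∀ ℓ : G.Loc, ¬G.isFin ℓ → G.isUrg ℓ)
    (σmin : G.MinStrategy) (σmax : G.MaxStrategy) {s : G.Conf} (hs : G.validConf s)
    (n : ℕ) : G.ValidFrom s (G.hist σmin σmax s n) := by
  induction n with
  | zero => trivial
  | succ n ih =>
    show G.ValidFrom s (G.step σmin σmax s (G.hist σmin σmax s n))
    set l := G.hist σmin σmax s n with hl
    unfold SPTG.step
    by_cases hd : G.deadlock (G.endConf s l)
    · rwa [if_pos hd]
    rw [if_neg hd]
    by_cases hmin : G.isMin (G.endConf s l).1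
    · rw [if_pos hmin]
      obtain ⟨m, hm, hcan⟩ := σmin.legal s l hs ih hmin hd
      rw [hm]
      exact (validFrom_append G s l [m]).mpr ⟨ih, hcan, trivial⟩
    · rw [if_neg hmin]
      have hnf : ¬ G.isFin (G.endConf s l).1 := by
        intro hf
        exact hd (fin_deadlock G hf)
      obtain ⟨m, hm, hcan⟩ := σmax.legal s l hs ih (isMax_of G hnf hmin) hd
      rw [hm]
      exact (validFrom_append G s l [m]).mpr ⟨ih, hcan, trivial⟩

/-- Consistency of the history with Max's positional strategy. -/
lemma hist_maxCons (hurg : ∀ ℓ : G.Loc, ¬G.isFin ℓ → G.isUrg ℓ)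
    (σmin : G.MinStrategy) {s : G.Conf} (hs : G.validConf s) (n : ℕ) :
    MaxCons G ν s (G.hist σmin (sigmaMax G ν hurg) s n) := by
  induction n with
  | zero => exact maxCons_nil G ν s
  | succ n ih =>
    show MaxCons G ν s (G.step σmin (sigmaMax G ν hurg) s (G.hist σmin (sigmaMax G ν hurg) s n))
    set l := G.hist σmin (sigmaMax G ν hurg) s n with hl
    unfold SPTG.step
    by_cases hd : G.deadlock (G.endConf s l)
    · rwa [if_pos hd]
    rw [if_neg hd]
    by_cases hmin : G.isMin (G.endConf s l).1
    · rw [if_pos hmin]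
      obtain ⟨m, hm, hcan⟩ := σmin.legal s l hs (hist_valid G hurg σmin _ hs n) hmin hd
      rw [hm]
      exact maxCons_snoc G ν ih (fun hmax => absurd hmax (notMax_of_isMin G hmin))
    · rw [if_neg hmin]
      have hnf : ¬ G.isFin (G.endConf s l).1 := fun hf => hd (fin_deadlock G hf)
      obtain ⟨m, hm, hcan⟩ := (sigmaMax G ν hurg).legal s l hs
        (hist_valid G hurg σmin _ hs n) (isMax_of G hnf hmin) hd
      rw [hm]
      refine maxCons_snoc G ν ih (fun _ => ?_)
      rw [← hm]
      rfl


/-- The invariant of the play of Min's horizon-`M` strategy. -/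
lemma hist_min_inv (hurg : ∀ ℓ : G.Loc, ¬G.isFin ℓ → G.isUrg ℓ) (M : ℕ)
    (σmax : G.MaxStrategy) {s : G.Conf} (hs0 : 0 ≤ s.2) (hsr : s.2 ≤ G.r)
    (hM : U G ν M s.1 ≠ ⊤) (n : ℕ) :
    (G.isFin (G.endConf s (G.hist (sigmaMin G ν M hurg) σmax s n)).1 ∧
      ((G.transWtSum s (G.hist (sigmaMin G ν M hurg) σmax s n) : ℝ) : EReal) +
        cf G ν (G.endConf s (G.hist (sigmaMin G ν M hurg) σmax s n)).1 ≤ U G ν M s.1) ∨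
    (¬ G.isFin (G.endConf s (G.hist (sigmaMin G ν M hurg) σmax s n)).1 ∧
      (G.hist (sigmaMin G ν M hurg) σmax s n).length = n ∧
      ((G.transWtSum s (G.hist (sigmaMin G ν M hurg) σmax s n) : ℝ) : EReal) +
        U G ν (M - n) (G.endConf s (G.hist (sigmaMin G ν M hurg) σmax s n)).1 ≤ U G ν M s.1) := by
  have hs : G.validConf s := ⟨hs0, hsr⟩
  induction n with
  | zero =>
    by_cases hf : G.isFin s.1
    · left
      refine ⟨hf, ?_⟩
      rw [U_fin G ν M hf]
      show ((((0:ℤ) : ℝ)) : EReal) + cf G ν s.1 ≤ cf G ν s.1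
      simp
    · right
      refine ⟨hf, rfl, ?_⟩
      rw [Nat.sub_zero]
      show ((((0:ℤ) : ℝ)) : EReal) + U G ν M s.1 ≤ U G ν M s.1
      simp
  | succ n ih =>
    set l := G.hist (sigmaMin G ν M hurg) σmax s n with hl
    have hstep : G.hist (sigmaMin G ν M hurg) σmax s (n+1) =
        G.step (sigmaMin G ν M hurg) σmax s l := rfl
    rcases ih with ⟨hf, hbd⟩ | ⟨hnf, hlen, hbd⟩
    · -- final: the play is frozen
      have hd : G.deadlock (G.endConf s l) := fin_deadlock G hf
      have : G.hist (sigmaMin G ν M hurg) σmax s (n+1) = l := by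
        rw [hstep]
        unfold SPTG.step
        rw [if_pos hd]
      rw [this]
      exact Or.inl ⟨hf, hbd⟩
    · -- not final yet
      set e := G.endConf s l with he
      have hvalid : G.ValidFrom s l := hist_valid G hurg _ σmax hs n
      have hUe : U G ν (M - n) e.1 ≠ ⊤ := by
        intro htop
        rw [htop] at hbd
        rw [EReal.add_top_of_ne_bot (EReal.coe_ne_bot _)] at hbd
        exact hM (top_le_iff.mp hbd)
      have hnM : n < M := by
        by_contra hc
        push_neg at hc
        rw [Nat.sub_eq_zero_of_le hc, U_zero_nonfin G ν hnf] at hUe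
        exact hUe rfl
      have hMn : M - n = (M - (n+1)) + 1 := by omega
      have hcl : e.2 = s.2 := clock_const G hurg hvalid
      have hne : (succ G e.1).Nonempty := by
        by_contra hc
        rw [hMn, U_succ_dead G ν hnf _ hc] at hUe
        exact hUe rfl
      have hnd : ¬ G.deadlock e := (not_deadlock_iff G (hcl ▸ hsr)).mpr hne
      -- generic continuation
      have main : ∀ m : G.Move,
          ((((G.transWt e.1 m.tgt : ℝ)):EReal) + U G ν (M - (n+1)) m.tgt ≤ U G ν (M - n) e.1) →
          G.hist (sigmaMin G ν M hurg) σmax s (n+1) = l ++ [m] →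
          (G.isFin (G.endConf s (G.hist (sigmaMin G ν M hurg) σmax s (n+1))).1 ∧
            ((G.transWtSum s (G.hist (sigmaMin G ν M hurg) σmax s (n+1)) : ℝ) : EReal) +
              cf G ν (G.endConf s (G.hist (sigmaMin G ν M hurg) σmax s (n+1))).1 ≤
              U G ν M s.1) ∨
          (¬ G.isFin (G.endConf s (G.hist (sigmaMin G ν M hurg) σmax s (n+1))).1 ∧
            (G.hist (sigmaMin G ν M hurg) σmax s (n+1)).length = n + 1 ∧
            ((G.transWtSum s (G.hist (sigmaMin G ν M hurg) σmax s (n+1)) : ℝ) : EReal) +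
              U G ν (M - (n+1)) (G.endConf s
                (G.hist (sigmaMin G ν M hurg) σmax s (n+1))).1 ≤ U G ν M s.1) := by
        intro m hkey hplay
        have hend : G.endConf s (l ++ [m]) = G.applyMove e m := by
          rw [endConf_append]
          rfl
        have hend1 : (G.endConf s (l ++ [m])).1 = m.tgt := by rw [hend]; rfl
        have hz : G.transWtSum s (l ++ [m]) = G.transWtSum s l + G.transWt e.1 m.tgt := by
          rw [transWtSum_append]
          congr 1
          show G.transWt e.1 m.tgt + G.transWtSum (G.applyMove e m) [] = _
          simp [SPTG.transWtSum]
        have hsum : (G.transWtSum s (l ++ [m]) : ℝ) =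
            (G.transWtSum s l : ℝ) + (G.transWt e.1 m.tgt : ℝ) := by
          rw [hz]
          push_cast
          ring
        have hchain : ((G.transWtSum s (l ++ [m]) : ℝ) : EReal) +
            U G ν (M - (n+1)) m.tgt ≤ U G ν M s.1 := by
          calc ((G.transWtSum s (l ++ [m]) : ℝ) : EReal) + U G ν (M - (n+1)) m.tgt
              = ((G.transWtSum s l : ℝ) : EReal) +
                ((((G.transWt e.1 m.tgt : ℝ)):EReal) + U G ν (M - (n+1)) m.tgt) := by
                rw [coe_add_assoc, ← hsum]
            _ ≤ ((G.transWtSum s l : ℝ) : EReal) + U G ν (M - n) e.1 :=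
                add_le_add_right hkey _
            _ ≤ U G ν M s.1 := hbd
        rw [hplay, hend1]
        by_cases hf' : G.isFin m.tgt
        · left
          refine ⟨hf', ?_⟩
          have : cf G ν m.tgt = U G ν (M - (n+1)) m.tgt := (U_fin G ν _ hf').symm
          rw [this]
          exact hchain
        · right
          refine ⟨hf', ?_, hchain⟩
          rw [List.length_append, hlen]
          rfl
      by_cases hmin : G.isMin e.1
      · have hmove : (sigmaMin G ν M hurg).move s l =
            some ⟨0, aminD G ν (M - (l.length + 1)) e.1 hne⟩ := dif_pos hne
        have hplay : G.hist (sigmaMin G ν M hurg) σmax s (n+1) =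
            l ++ [⟨0, aminD G ν (M - (l.length + 1)) e.1 hne⟩] := by
          rw [hstep]
          unfold SPTG.step
          rw [if_neg hnd, if_pos hmin, hmove]
        refine main ⟨0, aminD G ν (M - (l.length + 1)) e.1 hne⟩ ?_ hplay
        show (((G.transWt e.1 (aminD G ν (M - (l.length+1)) e.1 hne) : ℝ)):EReal) +
          U G ν (M - (n+1)) (aminD G ν (M - (l.length+1)) e.1 hne) ≤ U G ν (M - n) e.1
        rw [hlen]
        rw [hMn, U_succ_min G ν hnf hmin _ hne, aminD_spec G ν _ _ hne]
      · obtain ⟨m, hm, hcan⟩ := σmax.legal s l hs hvalid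
          (isMax_of G hnf hmin) hnd
        have hplay : G.hist (sigmaMin G ν M hurg) σmax s (n+1) = l ++ [m] := by
          rw [hstep]
          unfold SPTG.step
          rw [if_neg hnd, if_neg hmin, hm]
        refine main m ?_ hplay
        rw [hMn, U_succ_max G ν hnf hmin _ hne]
        exact Finset.le_sup'
          (fun ℓ' => (((G.transWt e.1 ℓ' : ℝ)):EReal) + U G ν (M - (n+1)) ℓ')
          ((mem_succ G).mpr hcan.2.2.1)


lemma exists_final (hurg : ∀ ℓ : G.Loc, ¬G.isFin ℓ → G.isUrg ℓ) (M : ℕ)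
    (σmax : G.MaxStrategy) {s : G.Conf} (hs0 : 0 ≤ s.2) (hsr : s.2 ≤ G.r)
    (hM : U G ν M s.1 ≠ ⊤) :
    ∃ n, G.isFin (G.endConf s (G.hist (sigmaMin G ν M hurg) σmax s n)).1 := by
  rcases hist_min_inv G ν hurg M σmax hs0 hsr hM M with ⟨hf, _⟩ | ⟨hnf, _, hbd⟩
  · exact ⟨M, hf⟩
  · exfalso
    rw [Nat.sub_self, U_zero_nonfin G ν hnf,
      EReal.add_top_of_ne_bot (EReal.coe_ne_bot _)] at hbd
    exact hM (top_le_iff.mp hbd)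

lemma playCost_le (hurg : ∀ ℓ : G.Loc, ¬G.isFin ℓ → G.isUrg ℓ) (M : ℕ)
    (σmax : G.MaxStrategy) {s : G.Conf} (hs0 : 0 ≤ s.2) (hsr : s.2 ≤ G.r) (hsν : s.2 = ν)
    (hM : U G ν M s.1 ≠ ⊤) :
    G.playCost s (sigmaMin G ν M hurg) σmax ≤ U G ν M s.1 := by
  have hex := exists_final G ν hurg M σmax hs0 hsr hM
  rw [SPTG.playCost, dif_pos hex]
  set n₀ := Nat.find hex with hn₀
  have hfinal := Nat.find_spec hex
  set l := G.hist (sigmaMin G ν M hurg) σmax s n₀ with hl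
  rcases hist_min_inv G ν hurg M σmax hs0 hsr hM n₀ with ⟨_, hbd⟩ | ⟨hnf, _, _⟩
  · have hvalid : G.ValidFrom s l := hist_valid G hurg _ σmax ⟨hs0, hsr⟩ n₀
    have hfp : G.finPrice s l = (G.transWtSum s l : ℝ) + G.finalCost (G.endConf s l).1 ν := by
      rw [finPrice_eq G hurg hvalid, if_pos hfinal, hsν]
    rw [hfp]
    rw [EReal.coe_add]
    exact hbd
  · exact absurd hfinal hnf

lemma playCost_ge (hurg : ∀ ℓ : G.Loc, ¬G.isFin ℓ → G.isUrg ℓ)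
    (σmin : G.MinStrategy) {s : G.Conf} (hs0 : 0 ≤ s.2) (hsr : s.2 ≤ G.r) (hsν : s.2 = ν) :
    V G ν s.1 ≤ G.playCost s σmin (sigmaMax G ν hurg) := by
  rw [SPTG.playCost]
  split
  · rename_i hex
    set n₀ := Nat.find hex with hn₀
    have hfinal := Nat.find_spec hex
    set l := G.hist σmin (sigmaMax G ν hurg) s n₀ with hl
    have hvalid : G.ValidFrom s l := hist_valid G hurg σmin _ ⟨hs0, hsr⟩ n₀
    have hcons : MaxCons G ν s l := hist_maxCons G ν hurg σmin ⟨hs0, hsr⟩ n₀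
    have hlow := maxCons_lower G ν hurg l s hsν hvalid hcons hfinal
    have hfp : G.finPrice s l = (G.transWtSum s l : ℝ) + G.finalCost (G.endConf s l).1 ν := by
      rw [finPrice_eq G hurg hvalid, if_pos hfinal, hsν]
    rw [hfp, EReal.coe_add]
    exact hlow
  · exact le_top

lemma val_eq_V (hurg : ∀ ℓ : G.Loc, ¬G.isFin ℓ → G.isUrg ℓ) (ℓ : G.Loc)
    (hν0 : 0 ≤ ν) (hνr : ν ≤ G.r) : G.val ℓ ν = V G ν ℓ := by
  have hs0 : (0:ℝ) ≤ ((ℓ, ν) : G.Conf).2 := hν0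
  have hsr : ((ℓ, ν) : G.Conf).2 ≤ G.r := hνr
  refine le_antisymm ?_ ?_
  · refine le_iInf fun M => ?_
    by_cases hM : U G ν M ℓ = ⊤
    · rw [hM]; exact le_top
    · exact iInf_le_of_le (sigmaMin G ν M hurg)
        (iSup_le fun σmax => playCost_le G ν hurg M σmax hs0 hsr rfl hM)
  · refine le_iInf fun σmin => ?_
    exact le_iSup_of_le (sigmaMax G ν hurg) (playCost_ge G ν hurg σmin hs0 hsr rfl)


/-! ### Cycle surgery -/

lemma maxCons_append_split {s : G.Conf} {x y : List G.Move} (h : MaxCons G ν s (x ++ y)) :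
    MaxCons G ν s x ∧ MaxCons G ν (G.endConf s x) y := by
  constructor
  · intro l₁ m l₂ hdec hmax
    exact h l₁ m (l₂ ++ y) (by rw [hdec]; simp) hmax
  · intro l₁ m l₂ hdec hmax
    have h2 : x ++ y = (x ++ l₁) ++ m :: l₂ := by rw [hdec]; simp
    have := h (x ++ l₁) m l₂ h2 (by rwa [endConf_append])
    rwa [endConf_append] at this

lemma maxCons_append {s : G.Conf} {x y : List G.Move} (hx : MaxCons G ν s x)
    (hy : MaxCons G ν (G.endConf s x) y) : MaxCons G ν s (x ++ y) := by
  induction x generalizing s with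
  | nil => exact hy
  | cons m t ih =>
    intro l₁ m' l₂ hdec hmax
    cases l₁ with
    | nil =>
      have : m' = m := by
        have := List.cons.injEq .. ▸ hdec
        exact this.1.symm
      subst this
      exact hx [] m' t rfl hmax
    | cons m'' t₁ =>
      have hdec2 := List.cons.injEq .. ▸ hdec
      obtain ⟨hm'', ht⟩ := hdec2
      subst hm''
      have hmax2 : G.isMax (G.endConf (G.applyMove s m) t₁).1 := by
        rwa [endConf_cons] at hmax
      have := ih (maxCons_cons G ν hx) (by rwa [endConf_cons] at hy) t₁ m' l₂ ht hmax2
      rwa [endConf_cons]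

/-- A "good" play: valid, consistent with Max's positional strategy, reaching a final
location. -/
def Good (s : G.Conf) (l : List G.Move) : Prop :=
  G.ValidFrom s l ∧ MaxCons G ν s l ∧ G.isFin (G.endConf s l).1

/-- Real-valued price of a play. -/
def costR (s : G.Conf) (l : List G.Move) : ℝ :=
  (G.transWtSum s l : ℝ) + G.finalCost (G.endConf s l).1 ν

lemma good_lower (hurg : ∀ ℓ : G.Loc, ¬G.isFin ℓ → G.isUrg ℓ) {s : G.Conf} (hsν : s.2 = ν)
    {l : List G.Move} (h : Good G ν s l) : V G ν s.1 ≤ ((costR G ν s l : ℝ) : EReal) := by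
  have := maxCons_lower G ν hurg l s hsν h.1 h.2.1 h.2.2
  rwa [costR, EReal.coe_add]

lemma shorten (hurg : ∀ ℓ : G.Loc, ¬G.isFin ℓ → G.isUrg ℓ) {s : G.Conf} (hsν : s.2 = ν)
    (v : ℝ) (hV : V G ν s.1 = ((v : ℝ) : EReal)) {l : List G.Move} (hgood : Good G ν s l)
    (hcost : costR G ν s l = v) (hlong : Fintype.card G.Loc ≤ l.length) :
    ∃ l', Good G ν s l' ∧ costR G ν s l' = v ∧ l'.length < l.length := by
  obtain ⟨hv, hmc, hfin⟩ := hgood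
  -- pigeonhole on visited locations
  have hcard : Fintype.card G.Loc < Fintype.card (Fin (Fintype.card G.Loc + 1)) := by
    rw [Fintype.card_fin]
    omega
  obtain ⟨i, j, hij, hfeq⟩ := Fintype.exists_ne_map_eq_of_card_lt
    (fun i : Fin (Fintype.card G.Loc + 1) => (G.endConf s (l.take i)).1) hcard
  -- wlog i < j
  wlog hlt : (i : ℕ) < (j : ℕ) generalizing i j
  · have hne : (i:ℕ) ≠ (j:ℕ) := fun h => hij (Fin.ext h)
    exact this j i hij.symm hfeq.symm (by omega)
  set a := l.take i with ha
  set b := (l.drop i).take ((j : ℕ) - i) with hb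
  set d := l.drop j with hd
  have hij' : (i : ℕ) + ((j:ℕ) - i) = j := by omega
  have hab : a ++ b = l.take j := by
    rw [ha, hb, ← List.take_add, hij']
  have habd : (a ++ b) ++ d = l := by
    rw [hab, hd, List.take_append_drop]
  have hjlen : (j : ℕ) ≤ l.length := le_trans (by omega) hlong
  have hblen : b.length = (j : ℕ) - i := by
    rw [hb, List.length_take, List.length_drop]
    omega
  have hbne : b.length ≠ 0 := by omega
  -- validity of pieces
  have hvab : G.ValidFrom s (a ++ b) ∧ G.ValidFrom (G.endConf s (a ++ b)) d := by
    have := (validFrom_append G s (a ++ b) d)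
    rw [habd] at this
    exact this.mp hv
  have hva : G.ValidFrom s a ∧ G.ValidFrom (G.endConf s a) b :=
    (validFrom_append G s a b).mp hvab.1
  -- the cycle returns to the same configuration
  have hcc : G.endConf s (a ++ b) = G.endConf s a := by
    have h1 : (G.endConf s (a ++ b)).1 = (G.endConf s a).1 := by
      rw [hab, ha]
      exact hfeq.symm
    have h2 : (G.endConf s (a ++ b)).2 = (G.endConf s a).2 := by
      rw [clock_const G hurg hvab.1, clock_const G hurg hva.1]
    exact Prod.ext h1 h2
  -- consistency of pieces
  have hmcab : MaxCons G ν s (a ++ b) ∧ MaxCons G ν (G.endConf s (a ++ b)) d := by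
    have := maxCons_append_split G ν (x := a ++ b) (y := d) (by rwa [habd])
    exact this
  have hmca : MaxCons G ν s a ∧ MaxCons G ν (G.endConf s a) b :=
    maxCons_append_split G ν hmcab.1
  have hmcd : MaxCons G ν (G.endConf s a) d := by
    rw [← hcc]
    exact hmcab.2
  have hvd : G.ValidFrom (G.endConf s a) d := by
    rw [← hcc]
    exact hvab.2
  -- weights
  set wb : ℤ := G.transWtSum (G.endConf s a) b with hwb
  have hsuml : G.transWtSum s l = G.transWtSum s a + wb + G.transWtSum (G.endConf s a) d := by
    conv_lhs => rw [← habd]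
    rw [transWtSum_append, transWtSum_append, hcc]
  -- the shortened play
  have hgood' : Good G ν s (a ++ d) := by
    refine ⟨(validFrom_append G s a d).mpr ⟨hva.1, hvd⟩, maxCons_append G ν hmca.1 hmcd, ?_⟩
    rw [endConf_append]
    rw [← hcc, ← endConf_append, habd]
    exact hfin
  have hend' : G.endConf s (a ++ d) = G.endConf s l := by
    rw [endConf_append, ← hcc, ← endConf_append, habd]
  have hsum' : G.transWtSum s (a ++ d) = G.transWtSum s a + G.transWtSum (G.endConf s a) d := by
    rw [transWtSum_append]
  have hcost' : costR G ν s (a ++ d) = v - wb := by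
    rw [costR, hend', hsum']
    rw [costR, hsuml] at hcost
    push_cast at hcost ⊢
    linarith
  -- the pumped play
  have hvb2 : G.ValidFrom (G.endConf s a) (b ++ (b ++ d)) := by
    refine (validFrom_append G _ b (b ++ d)).mpr ⟨hva.2, ?_⟩
    have : G.endConf (G.endConf s a) b = G.endConf s a := by
      rw [← endConf_append, hcc]
    rw [this]
    exact (validFrom_append G _ b d).mpr ⟨hva.2, by rw [this]; exact hvd⟩
  have hgood'' : Good G ν s (a ++ (b ++ (b ++ d))) := by
    have hcb : G.endConf (G.endConf s a) b = G.endConf s a := by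
      rw [← endConf_append, hcc]
    refine ⟨(validFrom_append G s a _).mpr ⟨hva.1, hvb2⟩, ?_, ?_⟩
    · refine maxCons_append G ν hmca.1 ?_
      refine maxCons_append G ν hmca.2 ?_
      rw [hcb]
      exact maxCons_append G ν hmca.2 (by rw [hcb]; exact hmcd)
    · rw [endConf_append, endConf_append, hcb, endConf_append, hcb]
      rw [← hcc, ← endConf_append, habd]
      exact hfin
  have hend'' : G.endConf s (a ++ (b ++ (b ++ d))) = G.endConf s l := by
    have hcb : G.endConf (G.endConf s a) b = G.endConf s a := by
      rw [← endConf_append, hcc]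
    rw [endConf_append, endConf_append, hcb, endConf_append, hcb, ← hcc, ← endConf_append, habd]
  have hcost'' : costR G ν s (a ++ (b ++ (b ++ d))) = v + wb := by
    have hcb : G.endConf (G.endConf s a) b = G.endConf s a := by
      rw [← endConf_append, hcc]
    rw [costR, hend'']
    have : G.transWtSum s (a ++ (b ++ (b ++ d))) =
        G.transWtSum s a + wb + wb + G.transWtSum (G.endConf s a) d := by
      rw [transWtSum_append, transWtSum_append, hcb, transWtSum_append, hcb]
      ring
    rw [this]
    rw [costR, hsuml] at hcost
    push_cast at hcost ⊢
    linarith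
  -- wb = 0
  have hwb_le : wb ≤ 0 := by
    have := good_lower G ν hurg hsν hgood'
    rw [hV, hcost'] at this
    have hle : v ≤ v - (wb : ℝ) := EReal.coe_le_coe_iff.mp this
    have : (wb : ℝ) ≤ 0 := by linarith
    exact_mod_cast this
  have hwb_ge : 0 ≤ wb := by
    have := good_lower G ν hurg hsν hgood''
    rw [hV, hcost''] at this
    have hle : v ≤ v + (wb : ℝ) := EReal.coe_le_coe_iff.mp this
    have : (0:ℝ) ≤ (wb : ℝ) := by linarith
    exact_mod_cast this
  have hwb0 : wb = 0 := le_antisymm hwb_le hwb_ge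
  refine ⟨a ++ d, hgood', by rw [hcost', hwb0]; push_cast; ring, ?_⟩
  have hlen : l.length = a.length + b.length + d.length := by
    conv_lhs => rw [← habd]
    simp
    omega
  rw [List.length_append]
  omega

/-! ### Weight bounds -/

lemma wT_bddAbove : BddAbove (Set.range fun p : G.Loc × G.Loc =>
    if G.trans p.1 p.2 then |(G.transWt p.1 p.2 : ℝ)| else 0) :=
  Set.Finite.bddAbove (Set.finite_range _)

lemma wT_nonneg (ℓ₀ : G.Loc) : 0 ≤ G.wT := by
  refine le_trans ?_ (le_ciSup (wT_bddAbove G) (ℓ₀, ℓ₀))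
  split <;> positivity

lemma abs_transWt_le {ℓ ℓ' : G.Loc} (h : G.trans ℓ ℓ') : |(G.transWt ℓ ℓ' : ℝ)| ≤ G.wT := by
  have := le_ciSup (wT_bddAbove G) (ℓ, ℓ')
  rwa [if_pos h] at this

lemma sum_bound (ℓ₀ : G.Loc) : ∀ (l : List G.Move) (s : G.Conf), G.ValidFrom s l →
    |(G.transWtSum s l : ℝ)| ≤ l.length * G.wT := by
  intro l
  induction l with
  | nil => intro s _; simp [SPTG.transWtSum]
  | cons m t ih =>
    intro s hv
    have h1 : |(G.transWt s.1 m.tgt : ℝ)| ≤ G.wT := abs_transWt_le G hv.1.2.2.1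
    have h2 := ih (G.applyMove s m) hv.2
    have : (G.transWtSum s (m :: t) : ℝ) =
        (G.transWt s.1 m.tgt : ℝ) + (G.transWtSum (G.applyMove s m) t : ℝ) := by
      show ((G.transWt s.1 m.tgt + G.transWtSum (G.applyMove s m) t : ℤ) : ℝ) = _
      push_cast
      ring
    rw [this]
    calc |(G.transWt s.1 m.tgt : ℝ) + (G.transWtSum (G.applyMove s m) t : ℝ)|
        ≤ |(G.transWt s.1 m.tgt : ℝ)| + |(G.transWtSum (G.applyMove s m) t : ℝ)| :=
          abs_add_le _ _
      _ ≤ G.wT + t.length * G.wT := add_le_add h1 h2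
      _ = (m :: t).length * G.wT := by
          rw [List.length_cons]
          push_cast
          ring

end UrgentFG


open SPTG in
/-- **Lemma: finite values come from `F_G`.** In an `r`-SPTG with only
urgent (non-final) locations, every finite value `Val_G(ℓ,ν)` is of the form
`k + φ_{ℓ'}(ν)` with `ℓ' ∈ L_Fin` and `k ∈ ℤ`, `|k| ≤ (|L|-1)·w_T`. -/
theorem urgent_value_in_FG (G : SPTG) (hq : ∃ q : ℚ, G.r = (q : ℝ))
    (hrat : G.ratFinal) (hurg : ∀ ℓ : G.Loc, ¬G.isFin ℓ → G.isUrg ℓ)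
    (ℓ : G.Loc) (ν : ℝ) (hν0 : 0 ≤ ν) (hνr : ν ≤ G.r)
    (hfin : ∃ v : ℝ, G.val ℓ ν = (v : EReal)) :
    ∃ (k : ℤ) (ℓ' : G.Loc), G.isFin ℓ' ∧
      -(((Fintype.card G.Loc : ℝ) - 1) * G.wT) ≤ (k : ℝ) ∧
      (k : ℝ) ≤ ((Fintype.card G.Loc : ℝ) - 1) * G.wT ∧
      G.val ℓ ν = (((k : ℝ) + G.finalCost ℓ' ν : ℝ) : EReal) := by
  classical
  obtain ⟨v, hval⟩ := hfin
  set s : G.Conf := (ℓ, ν) with hsdef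
  have hVv : UrgentFG.V G ν ℓ = ((v : ℝ) : EReal) := by
    rw [← UrgentFG.val_eq_V G ν hurg ℓ hν0 hνr]
    exact hval
  obtain ⟨M, hM⟩ := UrgentFG.stab G ν (fun m => UrgentFG.U G ν m ℓ)
    (UrgentFG.U_antitone G ν ℓ) (fun m => UrgentFG.U_mem_D G ν m ℓ) v hVv
  have hMne : UrgentFG.U G ν M s.1 ≠ ⊤ := by
    show UrgentFG.U G ν M ℓ ≠ ⊤
    rw [hM]
    exact EReal.coe_ne_top v
  have hs0 : (0:ℝ) ≤ s.2 := hν0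
  have hsr : s.2 ≤ G.r := hνr
  have hsν : s.2 = ν := rfl
  set σmax := UrgentFG.sigmaMax G ν hurg with hσmax
  have hex := UrgentFG.exists_final G ν hurg M σmax hs0 hsr hMne
  set n₀ := Nat.find hex with hn₀
  have hfinal := Nat.find_spec hex
  set l₀ := G.hist (UrgentFG.sigmaMin G ν M hurg) σmax s n₀ with hl₀
  have hvalid : G.ValidFrom s l₀ :=
    UrgentFG.hist_valid G hurg _ σmax ⟨hs0, hsr⟩ n₀
  have hcons : UrgentFG.MaxCons G ν s l₀ := UrgentFG.hist_maxCons G ν hurg _ ⟨hs0, hsr⟩ n₀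
  have hgood₀ : UrgentFG.Good G ν s l₀ := ⟨hvalid, hcons, hfinal⟩
  have hcost_le : UrgentFG.costR G ν s l₀ ≤ v := by
    rcases UrgentFG.hist_min_inv G ν hurg M σmax hs0 hsr hMne n₀ with ⟨_, hbd⟩ | ⟨hnf, _, _⟩
    · rw [hM] at hbd
      have : ((UrgentFG.costR G ν s l₀ : ℝ) : EReal) ≤ ((v : ℝ) : EReal) := by
        rw [UrgentFG.costR, EReal.coe_add]
        exact hbd
      exact EReal.coe_le_coe_iff.mp this
    · exact absurd hfinal hnf
  have hcost_ge : v ≤ UrgentFG.costR G ν s l₀ := by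
    have := UrgentFG.good_lower G ν hurg hsν hgood₀
    rw [hVv] at this
    exact EReal.coe_le_coe_iff.mp this
  have hc0 : UrgentFG.costR G ν s l₀ = v := le_antisymm hcost_le hcost_ge
  have main : ∀ n (l : List G.Move), l.length = n → UrgentFG.Good G ν s l →
      UrgentFG.costR G ν s l = v →
      ∃ l', UrgentFG.Good G ν s l' ∧ UrgentFG.costR G ν s l' = v ∧
        l'.length < Fintype.card G.Loc := by
    intro n
    induction n using Nat.strong_induction_on with
    | _ n ih =>
      intro l hlen hg hc
      by_cases hshort : l.length < Fintype.card G.Loc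
      · exact ⟨l, hg, hc, hshort⟩
      · obtain ⟨l', hg', hc', hlt⟩ := UrgentFG.shorten G ν hurg hsν v hVv hg hc
          (not_lt.mp hshort)
        exact ih l'.length (hlen ▸ hlt) l' rfl hg' hc'
  obtain ⟨lf, hgf, hcf, hshort⟩ := main l₀.length l₀ rfl hgood₀ hc0
  refine ⟨G.transWtSum s lf, (G.endConf s lf).1, hgf.2.2, ?_, ?_, ?_⟩
  · have h1 : |(G.transWtSum s lf : ℝ)| ≤ lf.length * G.wT :=
      UrgentFG.sum_bound G ℓ lf s hgf.1
    have h2 : (lf.length : ℝ) ≤ (Fintype.card G.Loc : ℝ) - 1 := by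
      have hn : lf.length + 1 ≤ Fintype.card G.Loc := hshort
      have := (Nat.cast_le (α := ℝ)).mpr hn
      push_cast at this
      linarith
    have h3 : (lf.length : ℝ) * G.wT ≤ ((Fintype.card G.Loc : ℝ) - 1) * G.wT :=
      mul_le_mul_of_nonneg_right h2 (UrgentFG.wT_nonneg G ℓ)
    have := (abs_le.mp (le_trans h1 h3)).1
    linarith
  · have h1 : |(G.transWtSum s lf : ℝ)| ≤ lf.length * G.wT :=
      UrgentFG.sum_bound G ℓ lf s hgf.1
    have h2 : (lf.length : ℝ) ≤ (Fintype.card G.Loc : ℝ) - 1 := by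
      have hn : lf.length + 1 ≤ Fintype.card G.Loc := hshort
      have := (Nat.cast_le (α := ℝ)).mpr hn
      push_cast at this
      linarith
    have h3 : (lf.length : ℝ) * G.wT ≤ ((Fintype.card G.Loc : ℝ) - 1) * G.wT :=
      mul_le_mul_of_nonneg_right h2 (UrgentFG.wT_nonneg G ℓ)
    exact (abs_le.mp (le_trans h1 h3)).2
  · rw [hval]
    rw [UrgentFG.costR] at hcf
    exact_mod_cast congrArg (fun x : ℝ => ((x : ℝ) : EReal)) hcf.symm
end
end

section
/- Let G be an r-SPTG with Val_G(ℓ,ν) ∈ ℝ for all configurations, let ℓ be a non-urgent non-final location of Min and ℓ′ a non-urgent non-final location of Max. Then for all 0 ≤ ν < ν′ ≤ r, slope^ℓ_G(ν,ν′) ≥ −π(ℓ) and slope^{ℓ′}_G(ν,ν′) ≤ −π(ℓ′). -/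
/-!
Formalization of (simple) priced timed games (SPTGs) following
"One-Clock Priced Timed Games with Negative Weights"
(Brihaye, Geeraerts, Haddad, Lefaucheux, Monmege).
-/

noncomputable section
open scoped Classical

namespace SPTG

/-! ### Auxiliary material for the proof of the slope lemma -/

section SlopeAux

variable {G : SPTG}

lemma endConf_nil (s : G.Conf) : G.endConf s [] = s := rfl

lemma endConf_cons (s : G.Conf) (m : G.Move) (l : List G.Move) :
    G.endConf s (m :: l) = G.endConf (G.applyMove s m) l := rfl

lemma validFrom_append (s : G.Conf) (l : List G.Move) (m : G.Move)
    (h : G.ValidFrom s l) (hm : G.canMove (G.endConf s l) m) :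
    G.ValidFrom s (l ++ [m]) := by
  induction l generalizing s with
  | nil => exact ⟨hm, trivial⟩
  | cons a l ih => exact ⟨h.1, ih _ h.2 hm⟩

lemma validConf_applyMove {s : G.Conf} {m : G.Move}
    (hs : G.validConf s) (hm : G.canMove s m) : G.validConf (G.applyMove s m) :=
  ⟨by have h1 := hs.1; have h2 := hm.1; show (0:ℝ) ≤ s.2 + m.t; linarith, hm.2.1⟩

/-- All histories generated by a pair of strategies are valid plays. -/
lemma hist_valid (σ : SPTG.MinStrategy G) (τ : SPTG.MaxStrategy G) (s : G.Conf)
    (hs : G.validConf s) : ∀ n, G.ValidFrom s (G.hist σ τ s n) := by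
  intro n
  induction n with
  | zero => trivial
  | succ n ih =>
    show G.ValidFrom s (G.step σ τ s (G.hist σ τ s n))
    set l := G.hist σ τ s n with hl
    unfold SPTG.step
    split_ifs with hd hmin
    · exact ih
    · rcases σ.legal s l hs ih hmin hd with ⟨m, hm, hcm⟩
      rw [hm]
      exact validFrom_append _ _ _ ih hcm
    · by_cases hmax : G.isMax (G.endConf s l).1
      · rcases τ.legal s l hs ih hmax hd with ⟨m, hm, hcm⟩
        rw [hm]
        exact validFrom_append _ _ _ ih hcm
      · exfalso
        rcases G.partition (G.endConf s l).1 with h | h | h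
        · exact hmin h.1
        · exact hmax h.2.1
        · exact hd fun ⟨m, hm⟩ => G.trans_not_fin _ _ hm.2.2.1 h.2.2

variable (ν₁ ν₂ : ℝ)

/-- Shift the delay of a move up by `ν₂ - ν₁`. -/
def upM (m : G.Move) : G.Move := ⟨m.t + (ν₂ - ν₁), m.tgt⟩

/-- Shift the delay of a move down by `ν₂ - ν₁`. -/
def downM (m : G.Move) : G.Move := ⟨m.t - (ν₂ - ν₁), m.tgt⟩

/-- Shift the first move of a history up by `ν₂ - ν₁`. -/
def Ul : List G.Move → List G.Move
  | [] => []
  | m :: l => upM ν₁ ν₂ m :: l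

@[simp] lemma downM_upM (m : G.Move) : downM ν₁ ν₂ (upM ν₁ ν₂ m) = m := by
  cases m; simp [upM, downM]

@[simp] lemma upM_downM (m : G.Move) : upM ν₁ ν₂ (downM ν₁ ν₂ m) = m := by
  cases m; simp [upM, downM]

variable (ℓ₀ : G.Loc)

lemma applyMove_upM (m : G.Move) :
    G.applyMove (ℓ₀, ν₁) (upM ν₁ ν₂ m) = G.applyMove (ℓ₀, ν₂) m := by
  show (m.tgt, ν₁ + (m.t + (ν₂ - ν₁))) = (m.tgt, ν₂ + m.t)
  rw [show ν₁ + (m.t + (ν₂ - ν₁)) = ν₂ + m.t by ring]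

lemma applyMove_downM (m : G.Move) :
    G.applyMove (ℓ₀, ν₂) (downM ν₁ ν₂ m) = G.applyMove (ℓ₀, ν₁) m := by
  show (m.tgt, ν₂ + (m.t - (ν₂ - ν₁))) = (m.tgt, ν₁ + m.t)
  rw [show ν₂ + (m.t - (ν₂ - ν₁)) = ν₁ + m.t by ring]

lemma endConf_upM (m : G.Move) (l : List G.Move) :
    G.endConf (ℓ₀, ν₁) (upM ν₁ ν₂ m :: l) = G.endConf (ℓ₀, ν₂) (m :: l) := by
  rw [endConf_cons, endConf_cons, applyMove_upM]

variable {ν₁ ν₂ ℓ₀}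

lemma canMove_upM (h12 : ν₁ ≤ ν₂) (h2r : ν₂ ≤ G.r) (hurg : ¬G.isUrg ℓ₀)
    {m : G.Move} (hm : G.canMove (ℓ₀, ν₂) m) : G.canMove (ℓ₀, ν₁) (upM ν₁ ν₂ m) := by
  obtain ⟨h1, h2, h3, _⟩ := hm
  refine ⟨?_, ?_, h3, fun h => absurd h hurg⟩
  · show (0:ℝ) ≤ m.t + (ν₂ - ν₁); linarith
  · show ν₁ + (m.t + (ν₂ - ν₁)) ≤ G.r; linarith [h2]

lemma deadlock_iff (h01 : 0 ≤ ν₁) (h12 : ν₁ ≤ ν₂) (h2r : ν₂ ≤ G.r)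
    (hurg : ¬G.isUrg ℓ₀) : G.deadlock (ℓ₀, ν₁) ↔ G.deadlock (ℓ₀, ν₂) := by
  constructor
  · intro hd ⟨m, hm⟩
    exact hd ⟨upM ν₁ ν₂ m, canMove_upM h12 h2r hurg hm⟩
  · intro hd ⟨m, hm⟩
    exact hd ⟨⟨0, m.tgt⟩, le_refl 0, by simpa using h2r, hm.2.2.1, fun _ => rfl⟩

lemma validFrom_upM (h12 : ν₁ ≤ ν₂) (h2r : ν₂ ≤ G.r) (hurg : ¬G.isUrg ℓ₀)
    {m : G.Move} {l : List G.Move} (h : G.ValidFrom (ℓ₀, ν₂) (m :: l)) :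
    G.ValidFrom (ℓ₀, ν₁) (upM ν₁ ν₂ m :: l) := by
  refine ⟨canMove_upM h12 h2r hurg h.1, ?_⟩
  rw [applyMove_upM]
  exact h.2

lemma finPrice_upM (m : G.Move) (l : List G.Move) :
    G.finPrice (ℓ₀, ν₁) (upM ν₁ ν₂ m :: l) =
      (ν₂ - ν₁) * (G.locWt ℓ₀ : ℝ) + G.finPrice (ℓ₀, ν₂) (m :: l) := by
  show G.moveCost (ℓ₀, ν₁) (upM ν₁ ν₂ m) + G.finPrice (G.applyMove (ℓ₀, ν₁) (upM ν₁ ν₂ m)) l = _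
  rw [applyMove_upM]
  show (G.transWt ℓ₀ m.tgt : ℝ) + (m.t + (ν₂ - ν₁)) * (G.locWt ℓ₀ : ℝ) + _ = _
  show _ = (ν₂ - ν₁) * (G.locWt ℓ₀ : ℝ) +
    ((G.transWt ℓ₀ m.tgt : ℝ) + m.t * (G.locWt ℓ₀ : ℝ) + G.finPrice (G.applyMove (ℓ₀, ν₂) m) l)
  ring

variable (ν₁ ν₂ ℓ₀)

/-- Transfer a strategy for the game rooted at `(ℓ₀, ν₂)` to one rooted at `(ℓ₀, ν₁)`. -/
def tmove12 (f : G.Conf → List G.Move → Option G.Move) :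
    G.Conf → List G.Move → Option G.Move := fun s l =>
  if s = (ℓ₀, ν₁) then
    match l with
    | [] => (f (ℓ₀, ν₂) []).map (upM ν₁ ν₂)
    | m :: l' =>
      if G.canMove (ℓ₀, ν₂) (downM ν₁ ν₂ m) then f (ℓ₀, ν₂) (downM ν₁ ν₂ m :: l')
      else f (G.applyMove (ℓ₀, ν₁) m) l'
  else f s l

/-- Transfer a strategy for the game rooted at `(ℓ₀, ν₁)` to one rooted at `(ℓ₀, ν₂)`. -/
def tmove21 (f : G.Conf → List G.Move → Option G.Move) :
    G.Conf → List G.Move → Option G.Move := fun s l =>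
  if s = (ℓ₀, ν₂) then
    match l with
    | [] => (f (ℓ₀, ν₁) []).map (downM ν₁ ν₂)
    | m :: l' => f (ℓ₀, ν₁) (upM ν₁ ν₂ m :: l')
  else f s l

@[simp] lemma tmove12_nil (f : G.Conf → List G.Move → Option G.Move) :
    tmove12 ν₁ ν₂ ℓ₀ f (ℓ₀, ν₁) [] = (f (ℓ₀, ν₂) []).map (upM ν₁ ν₂) := by
  simp [tmove12]

lemma tmove12_cons (f : G.Conf → List G.Move → Option G.Move) (m : G.Move)
    (l' : List G.Move) (hm : G.canMove (ℓ₀, ν₂) (downM ν₁ ν₂ m)) :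
    tmove12 ν₁ ν₂ ℓ₀ f (ℓ₀, ν₁) (m :: l') = f (ℓ₀, ν₂) (downM ν₁ ν₂ m :: l') := by
  simp [tmove12, hm]

lemma tmove12_cons' (f : G.Conf → List G.Move → Option G.Move) (m : G.Move)
    (l' : List G.Move) (hm : ¬G.canMove (ℓ₀, ν₂) (downM ν₁ ν₂ m)) :
    tmove12 ν₁ ν₂ ℓ₀ f (ℓ₀, ν₁) (m :: l') = f (G.applyMove (ℓ₀, ν₁) m) l' := by
  simp [tmove12, hm]

@[simp] lemma tmove21_nil (f : G.Conf → List G.Move → Option G.Move) :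
    tmove21 ν₁ ν₂ ℓ₀ f (ℓ₀, ν₂) [] = (f (ℓ₀, ν₁) []).map (downM ν₁ ν₂) := by
  simp [tmove21]

@[simp] lemma tmove21_cons (f : G.Conf → List G.Move → Option G.Move) (m : G.Move)
    (l' : List G.Move) :
    tmove21 ν₁ ν₂ ℓ₀ f (ℓ₀, ν₂) (m :: l') = f (ℓ₀, ν₁) (upM ν₁ ν₂ m :: l') := by
  simp [tmove21]

variable {ν₁ ν₂ ℓ₀}

section Transfer

/-- Key legality transfer for `tmove12`. -/
lemma tmove12_legal (h01 : 0 ≤ ν₁) (h12 : ν₁ ≤ ν₂) (h2r : ν₂ ≤ G.r) (hurg : ¬G.isUrg ℓ₀) (f : G.Conf → List G.Move → Option G.Move)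
    (P : G.Loc → Prop)
    (hf : ∀ s l, G.validConf s → G.ValidFrom s l → P (G.endConf s l).1 →
      ¬G.deadlock (G.endConf s l) → ∃ m, f s l = some m ∧ G.canMove (G.endConf s l) m) :
    ∀ s l, G.validConf s → G.ValidFrom s l → P (G.endConf s l).1 →
      ¬G.deadlock (G.endConf s l) →
      ∃ m, tmove12 ν₁ ν₂ ℓ₀ f s l = some m ∧ G.canMove (G.endConf s l) m := by
  intro s l hv hvf hP hd
  by_cases hs : s = (ℓ₀, ν₁)
  · subst hs
    match l with
    | [] =>
      have hd2 : ¬G.deadlock (ℓ₀, ν₂) := fun h => hd ((deadlock_iff h01 h12 h2r hurg).mpr h)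
      obtain ⟨m, hm, hcm⟩ := hf (ℓ₀, ν₂) [] ⟨le_trans h01 h12, h2r⟩ trivial hP hd2
      exact ⟨upM ν₁ ν₂ m, by simp [hm], canMove_upM h12 h2r hurg hcm⟩
    | m :: l' =>
      by_cases hcd : G.canMove (ℓ₀, ν₂) (downM ν₁ ν₂ m)
      · have hend : G.endConf (ℓ₀, ν₂) (downM ν₁ ν₂ m :: l') = G.endConf (ℓ₀, ν₁) (m :: l') := by
          rw [endConf_cons, endConf_cons, applyMove_downM]
        obtain ⟨m', hm', hcm'⟩ := hf (ℓ₀, ν₂) (downM ν₁ ν₂ m :: l') ⟨le_trans h01 h12, h2r⟩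
          ⟨hcd, by rw [applyMove_downM]; exact hvf.2⟩ (hend ▸ hP) (hend ▸ hd)
        exact ⟨m', by rw [tmove12_cons (hm := hcd)]; exact hm', hend ▸ hcm'⟩
      · obtain ⟨m', hm', hcm'⟩ := hf (G.applyMove (ℓ₀, ν₁) m) l'
          (validConf_applyMove hv hvf.1) hvf.2 hP hd
        exact ⟨m', by rw [tmove12_cons' (hm := hcd)]; exact hm', hcm'⟩
  · obtain ⟨m, hm, hcm⟩ := hf s l hv hvf hP hd
    exact ⟨m, by simp [tmove12, hs, hm], hcm⟩

/-- Key legality transfer for `tmove21`: works provided the owner `P` does not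
own `ℓ₀` (so the empty history never needs a move). -/
lemma tmove21_legal (h01 : 0 ≤ ν₁) (h12 : ν₁ ≤ ν₂) (h2r : ν₂ ≤ G.r) (hurg : ¬G.isUrg ℓ₀) (f : G.Conf → List G.Move → Option G.Move)
    (P : G.Loc → Prop) (hnot : ¬P ℓ₀)
    (hf : ∀ s l, G.validConf s → G.ValidFrom s l → P (G.endConf s l).1 →
      ¬G.deadlock (G.endConf s l) → ∃ m, f s l = some m ∧ G.canMove (G.endConf s l) m) :
    ∀ s l, G.validConf s → G.ValidFrom s l → P (G.endConf s l).1 →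
      ¬G.deadlock (G.endConf s l) →
      ∃ m, tmove21 ν₁ ν₂ ℓ₀ f s l = some m ∧ G.canMove (G.endConf s l) m := by
  intro s l hv hvf hP hd
  by_cases hs : s = (ℓ₀, ν₂)
  · subst hs
    match l with
    | [] => exact absurd hP hnot
    | m :: l' =>
      have hend : G.endConf (ℓ₀, ν₁) (upM ν₁ ν₂ m :: l') = G.endConf (ℓ₀, ν₂) (m :: l') :=
        endConf_upM ν₁ ν₂ ℓ₀ m l'
      obtain ⟨m', hm', hcm'⟩ := hf (ℓ₀, ν₁) (upM ν₁ ν₂ m :: l') ⟨h01, le_trans h12 h2r⟩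
        (validFrom_upM h12 h2r hurg hvf) (hend ▸ hP) (hend ▸ hd)
      exact ⟨m', by rw [tmove21_cons]; exact hm', hend ▸ hcm'⟩
  · obtain ⟨m, hm, hcm⟩ := hf s l hv hvf hP hd
    exact ⟨m, by simp [tmove21, hs, hm], hcm⟩

/-- Transfer of a Min strategy from the `(ℓ₀,ν₂)` game to the `(ℓ₀,ν₁)` game. -/
def transfer12Min (h01 : 0 ≤ ν₁) (h12 : ν₁ ≤ ν₂) (h2r : ν₂ ≤ G.r) (hurg : ¬G.isUrg ℓ₀) (σ : MinStrategy G) : MinStrategy G where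
  move := tmove12 ν₁ ν₂ ℓ₀ σ.move
  legal := tmove12_legal h01 h12 h2r hurg σ.move G.isMin σ.legal

/-- Transfer of a Max strategy from the `(ℓ₀,ν₂)` game to the `(ℓ₀,ν₁)` game. -/
def transfer12Max (h01 : 0 ≤ ν₁) (h12 : ν₁ ≤ ν₂) (h2r : ν₂ ≤ G.r) (hurg : ¬G.isUrg ℓ₀) (τ : MaxStrategy G) : MaxStrategy G where
  move := tmove12 ν₁ ν₂ ℓ₀ τ.move
  legal := tmove12_legal h01 h12 h2r hurg τ.move G.isMax τ.legal

/-- Transfer of a Min strategy from the `(ℓ₀,ν₁)` game to the `(ℓ₀,ν₂)` game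
(when `ℓ₀` is not a Min location). -/
def transfer21Min (h01 : 0 ≤ ν₁) (h12 : ν₁ ≤ ν₂) (h2r : ν₂ ≤ G.r) (hurg : ¬G.isUrg ℓ₀) (hnot : ¬G.isMin ℓ₀) (σ : MinStrategy G) : MinStrategy G where
  move := tmove21 ν₁ ν₂ ℓ₀ σ.move
  legal := tmove21_legal h01 h12 h2r hurg σ.move G.isMin hnot σ.legal

/-- Transfer of a Max strategy from the `(ℓ₀,ν₁)` game to the `(ℓ₀,ν₂)` game
(when `ℓ₀` is not a Max location). -/
def transfer21Max (h01 : 0 ≤ ν₁) (h12 : ν₁ ≤ ν₂) (h2r : ν₂ ≤ G.r) (hurg : ¬G.isUrg ℓ₀) (hnot : ¬G.isMax ℓ₀) (τ : MaxStrategy G) : MaxStrategy G where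
  move := tmove21 ν₁ ν₂ ℓ₀ τ.move
  legal := tmove21_legal h01 h12 h2r hurg τ.move G.isMax hnot τ.legal

end Transfer

section Corr

variable (σ₁ σ₂ : MinStrategy G) (τ₁ τ₂ : MaxStrategy G)

/-- One-step correspondence between the two shifted games. -/
lemma step_corr (h01 : 0 ≤ ν₁) (h12 : ν₁ ≤ ν₂) (h2r : ν₂ ≤ G.r) (hurg : ¬G.isUrg ℓ₀)
    (hσ0 : σ₁.move (ℓ₀, ν₁) [] = (σ₂.move (ℓ₀, ν₂) []).map (upM ν₁ ν₂))
    (hτ0 : τ₁.move (ℓ₀, ν₁) [] = (τ₂.move (ℓ₀, ν₂) []).map (upM ν₁ ν₂))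
    (hσ : ∀ m l', G.canMove (ℓ₀, ν₂) m →
      σ₁.move (ℓ₀, ν₁) (upM ν₁ ν₂ m :: l') = σ₂.move (ℓ₀, ν₂) (m :: l'))
    (hτ : ∀ m l', G.canMove (ℓ₀, ν₂) m →
      τ₁.move (ℓ₀, ν₁) (upM ν₁ ν₂ m :: l') = τ₂.move (ℓ₀, ν₂) (m :: l'))
    (l : List G.Move) (hvf : G.ValidFrom (ℓ₀, ν₂) l) :
    G.step σ₁ τ₁ (ℓ₀, ν₁) (Ul ν₁ ν₂ l) = Ul ν₁ ν₂ (G.step σ₂ τ₂ (ℓ₀, ν₂) l) := by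
  match l with
  | [] =>
    show G.step σ₁ τ₁ (ℓ₀, ν₁) [] = Ul ν₁ ν₂ (G.step σ₂ τ₂ (ℓ₀, ν₂) [])
    unfold SPTG.step
    rw [endConf_nil, endConf_nil]
    by_cases hd : G.deadlock (ℓ₀, ν₂)
    · rw [if_pos ((deadlock_iff h01 h12 h2r hurg).mpr hd), if_pos hd]; rfl
    · rw [if_neg (fun h => hd ((deadlock_iff h01 h12 h2r hurg).mp h)), if_neg hd]
      by_cases hm : G.isMin ℓ₀
      · rw [if_pos hm, if_pos hm, hσ0]
        cases hc : σ₂.move (ℓ₀, ν₂) [] <;> simp [Ul]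
      · rw [if_neg hm, if_neg hm, hτ0]
        cases hc : τ₂.move (ℓ₀, ν₂) [] <;> simp [Ul]
  | m :: l' =>
    have hcm : G.canMove (ℓ₀, ν₂) m := hvf.1
    have hend : G.endConf (ℓ₀, ν₁) (upM ν₁ ν₂ m :: l') = G.endConf (ℓ₀, ν₂) (m :: l') :=
      endConf_upM ν₁ ν₂ ℓ₀ m l'
    show G.step σ₁ τ₁ (ℓ₀, ν₁) (upM ν₁ ν₂ m :: l') = Ul ν₁ ν₂ (G.step σ₂ τ₂ (ℓ₀, ν₂) (m :: l'))
    unfold SPTG.step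
    rw [hend]
    by_cases hd : G.deadlock (G.endConf (ℓ₀, ν₂) (m :: l'))
    · rw [if_pos hd, if_pos hd]; rfl
    · rw [if_neg hd, if_neg hd]
      by_cases hmin : G.isMin (G.endConf (ℓ₀, ν₂) (m :: l')).1
      · rw [if_pos hmin, if_pos hmin, hσ m l' hcm]
        cases hc : σ₂.move (ℓ₀, ν₂) (m :: l') <;> simp [Ul]
      · rw [if_neg hmin, if_neg hmin, hτ m l' hcm]
        cases hc : τ₂.move (ℓ₀, ν₂) (m :: l') <;> simp [Ul]

/-- The plays in the two shifted games correspond. -/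
lemma hist_corr (h01 : 0 ≤ ν₁) (h12 : ν₁ ≤ ν₂) (h2r : ν₂ ≤ G.r) (hurg : ¬G.isUrg ℓ₀)
    (hσ0 : σ₁.move (ℓ₀, ν₁) [] = (σ₂.move (ℓ₀, ν₂) []).map (upM ν₁ ν₂))
    (hτ0 : τ₁.move (ℓ₀, ν₁) [] = (τ₂.move (ℓ₀, ν₂) []).map (upM ν₁ ν₂))
    (hσ : ∀ m l', G.canMove (ℓ₀, ν₂) m →
      σ₁.move (ℓ₀, ν₁) (upM ν₁ ν₂ m :: l') = σ₂.move (ℓ₀, ν₂) (m :: l'))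
    (hτ : ∀ m l', G.canMove (ℓ₀, ν₂) m →
      τ₁.move (ℓ₀, ν₁) (upM ν₁ ν₂ m :: l') = τ₂.move (ℓ₀, ν₂) (m :: l')) :
    ∀ n, G.hist σ₁ τ₁ (ℓ₀, ν₁) n = Ul ν₁ ν₂ (G.hist σ₂ τ₂ (ℓ₀, ν₂) n) := by
  intro n
  induction n with
  | zero => rfl
  | succ n ih =>
    show G.step σ₁ τ₁ (ℓ₀, ν₁) (G.hist σ₁ τ₁ (ℓ₀, ν₁) n) = Ul ν₁ ν₂ (G.step σ₂ τ₂ (ℓ₀, ν₂) _)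
    rw [ih]
    exact step_corr σ₁ σ₂ τ₁ τ₂ h01 h12 h2r hurg hσ0 hτ0 hσ hτ _
      (hist_valid σ₂ τ₂ _ ⟨le_trans h01 h12, h2r⟩ n)

/-- Cost correspondence between the plays of the two shifted games. -/
lemma playCost_corr (h01 : 0 ≤ ν₁) (h12 : ν₁ ≤ ν₂) (h2r : ν₂ ≤ G.r) (hurg : ¬G.isUrg ℓ₀)
    (hnf : ¬G.isFin ℓ₀)
    (hσ0 : σ₁.move (ℓ₀, ν₁) [] = (σ₂.move (ℓ₀, ν₂) []).map (upM ν₁ ν₂))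
    (hτ0 : τ₁.move (ℓ₀, ν₁) [] = (τ₂.move (ℓ₀, ν₂) []).map (upM ν₁ ν₂))
    (hσ : ∀ m l', G.canMove (ℓ₀, ν₂) m →
      σ₁.move (ℓ₀, ν₁) (upM ν₁ ν₂ m :: l') = σ₂.move (ℓ₀, ν₂) (m :: l'))
    (hτ : ∀ m l', G.canMove (ℓ₀, ν₂) m →
      τ₁.move (ℓ₀, ν₁) (upM ν₁ ν₂ m :: l') = τ₂.move (ℓ₀, ν₂) (m :: l')) :
    G.playCost (ℓ₀, ν₁) σ₁ τ₁ =
      (((ν₂ - ν₁) * (G.locWt ℓ₀ : ℝ) : ℝ) : EReal) + G.playCost (ℓ₀, ν₂) σ₂ τ₂ := by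
  have hcorr := hist_corr σ₁ σ₂ τ₁ τ₂ h01 h12 h2r hurg hσ0 hτ0 hσ hτ
  have hiff : ∀ n, G.isFin (G.endConf (ℓ₀, ν₁) (G.hist σ₁ τ₁ (ℓ₀, ν₁) n)).1 ↔
      G.isFin (G.endConf (ℓ₀, ν₂) (G.hist σ₂ τ₂ (ℓ₀, ν₂) n)).1 := by
    intro n
    rw [hcorr n]
    cases hc : G.hist σ₂ τ₂ (ℓ₀, ν₂) n with
    | nil => exact Iff.rfl
    | cons m l' => rw [show Ul ν₁ ν₂ (m :: l') = upM ν₁ ν₂ m :: l' from rfl, endConf_upM]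
  unfold SPTG.playCost
  by_cases h₁ : ∃ n, G.isFin (G.endConf (ℓ₀, ν₁) (G.hist σ₁ τ₁ (ℓ₀, ν₁) n)).1
  · have h₂ : ∃ n, G.isFin (G.endConf (ℓ₀, ν₂) (G.hist σ₂ τ₂ (ℓ₀, ν₂) n)).1 :=
      ⟨Nat.find h₁, (hiff _).mp (Nat.find_spec h₁)⟩
    rw [dif_pos h₁, dif_pos h₂]
    have hNN : Nat.find h₁ = Nat.find h₂ :=
      le_antisymm (Nat.find_min' h₁ ((hiff _).mpr (Nat.find_spec h₂)))
        (Nat.find_min' h₂ ((hiff _).mp (Nat.find_spec h₁)))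
    rw [hNN, hcorr (Nat.find h₂)]
    have hNfin := Nat.find_spec h₂
    cases hc : G.hist σ₂ τ₂ (ℓ₀, ν₂) (Nat.find h₂) with
    | nil => rw [hc] at hNfin; exact absurd hNfin hnf
    | cons m l' =>
      rw [show Ul ν₁ ν₂ (m :: l') = upM ν₁ ν₂ m :: l' from rfl, finPrice_upM, EReal.coe_add]
  · have h₂ : ¬∃ n, G.isFin (G.endConf (ℓ₀, ν₂) (G.hist σ₂ τ₂ (ℓ₀, ν₂) n)).1 :=
      fun ⟨n, hn⟩ => h₁ ⟨n, (hiff n).mpr hn⟩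
    rw [dif_neg h₁, dif_neg h₂, EReal.coe_add_top]

end Corr

lemma add_cancelE (c : ℝ) (x : EReal) : ((-c : ℝ) : EReal) + ((c : ℝ) + x) = x := by
  induction x using EReal.rec with
  | bot => simp
  | coe y => rw [← EReal.coe_add, ← EReal.coe_add]; norm_num
  | top => rw [EReal.coe_add_top, EReal.coe_add_top]

/-- Adding a real constant is an order isomorphism of `EReal`. -/
def addIso (c : ℝ) : EReal ≃o EReal where
  toFun x := (c : ℝ) + x
  invFun x := ((-c : ℝ) : EReal) + x
  left_inv x := add_cancelE c x
  right_inv x := by simpa using add_cancelE (-c) x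
  map_rel_iff' := by
    intro x y
    constructor
    · intro h
      have h2 := add_le_add_right h (((-c : ℝ) : EReal))
      simp only [Equiv.coe_fn_mk] at h2
      rwa [add_cancelE, add_cancelE] at h2
    · intro h
      exact add_le_add_right h ((c : ℝ) : EReal)

lemma EReal.add_iInf' {ι : Sort*} (c : ℝ) (f : ι → EReal) :
    ((c : ℝ) : EReal) + ⨅ i, f i = ⨅ i, (((c : ℝ) : EReal) + f i) :=
  (addIso c).map_iInf f

lemma EReal.add_iSup' {ι : Sort*} (c : ℝ) (f : ι → EReal) :
    ((c : ℝ) : EReal) + ⨆ i, f i = ⨆ i, (((c : ℝ) : EReal) + f i) :=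
  (addIso c).map_iSup f

end SlopeAux

end SPTG

open SPTG in
/-- **Lemma: slopes of value functions.** In an `r`-SPTG with finite
values, if `ℓ` is a non-urgent non-final location of Min and `ℓ'` one of Max, then
for all `0 ≤ ν < ν' ≤ r` the slope of `Val_G(ℓ)` between `ν` and `ν'` is at least
`-π(ℓ)` and the slope of `Val_G(ℓ')` is at most `-π(ℓ')`. -/
theorem value_slope_bounds (G : SPTG) (hq : ∃ q : ℚ, G.r = (q : ℝ)) (hrat : G.ratFinal)
    (hfin : ∀ ℓ : G.Loc, ∀ ν : ℝ, 0 ≤ ν → ν ≤ G.r → ∃ v : ℝ, G.val ℓ ν = (v : EReal))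
    (ℓ ℓ' : G.Loc)
    (hℓ : G.isMin ℓ ∧ ¬G.isUrg ℓ ∧ ¬G.isFin ℓ)
    (hℓ' : G.isMax ℓ' ∧ ¬G.isUrg ℓ' ∧ ¬G.isFin ℓ') :
    ∀ ν₁ ν₂ : ℝ, 0 ≤ ν₁ → ν₁ < ν₂ → ν₂ ≤ G.r →
      -(G.locWt ℓ : ℝ) ≤ G.slope ℓ ν₁ ν₂ ∧ G.slope ℓ' ν₁ ν₂ ≤ -(G.locWt ℓ' : ℝ) := by
  intro ν₁ ν₂ h01 hlt h2r
  have h12 : ν₁ ≤ ν₂ := le_of_lt hlt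
  have hd : (0 : ℝ) < ν₂ - ν₁ := by linarith
  constructor
  · -- Min location: slope ≥ -π(ℓ)
    obtain ⟨hmin, hurg, hnf⟩ := hℓ
    have hnotmax : ¬G.isMax ℓ := by
      rcases G.partition ℓ with h | h | h
      exacts [h.2.1, absurd hmin h.1, absurd hmin h.1]
    obtain ⟨V₁, hV₁⟩ := hfin ℓ ν₁ h01 (le_trans h12 h2r)
    obtain ⟨V₂, hV₂⟩ := hfin ℓ ν₂ (le_trans h01 h12) h2r
    set c := (ν₂ - ν₁) * (G.locWt ℓ : ℝ) with hc
    have key1 : G.val ℓ ν₁ ≤ ((c : ℝ) : EReal) + G.val ℓ ν₂ := by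
      show G.upperVal (ℓ, ν₁) ≤ ((c : ℝ) : EReal) + G.upperVal (ℓ, ν₂)
      unfold SPTG.upperVal
      rw [EReal.add_iInf']
      apply le_iInf
      intro σ
      refine le_trans (iInf_le _ (transfer12Min h01 h12 h2r hurg σ)) ?_
      apply iSup_le
      intro τ
      have hcost := playCost_corr (transfer12Min h01 h12 h2r hurg σ) σ τ
          (transfer21Max h01 h12 h2r hurg hnotmax τ) h01 h12 h2r hurg hnf
          (by exact tmove12_nil ν₁ ν₂ ℓ σ.move)
          (by show τ.move (ℓ, ν₁) [] = Option.map (upM ν₁ ν₂) (tmove21 ν₁ ν₂ ℓ τ.move (ℓ, ν₂) [])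
              rw [tmove21_nil]
              cases τ.move (ℓ, ν₁) [] <;> simp)
          (by intro m l' hcm
              show tmove12 ν₁ ν₂ ℓ σ.move _ _ = _
              rw [tmove12_cons (hm := by rw [downM_upM]; exact hcm), downM_upM])
          (by intro m l' hcm
              exact (tmove21_cons ν₁ ν₂ ℓ τ.move m l').symm)
      rw [hcost]
      exact add_le_add_right (le_iSup _ (transfer21Max h01 h12 h2r hurg hnotmax τ)) _
    rw [hV₁, hV₂] at key1
    rw [← EReal.coe_add, EReal.coe_le_coe_iff] at key1
    show -(G.locWt ℓ : ℝ) ≤ ((G.val ℓ ν₂).toReal - (G.val ℓ ν₁).toReal) / (ν₂ - ν₁)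
    rw [hV₁, hV₂, EReal.toReal_coe, EReal.toReal_coe, le_div_iff₀ hd]
    rw [hc] at key1
    nlinarith [key1]
  · -- Max location: slope ≤ -π(ℓ')
    obtain ⟨hmax, hurg, hnf⟩ := hℓ'
    have hnotmin : ¬G.isMin ℓ' := by
      rcases G.partition ℓ' with h | h | h
      exacts [absurd hmax h.2.1, h.1, h.1]
    obtain ⟨V₁, hV₁⟩ := hfin ℓ' ν₁ h01 (le_trans h12 h2r)
    obtain ⟨V₂, hV₂⟩ := hfin ℓ' ν₂ (le_trans h01 h12) h2r
    set c := (ν₂ - ν₁) * (G.locWt ℓ' : ℝ) with hc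
    have key2 : ((c : ℝ) : EReal) + G.val ℓ' ν₂ ≤ G.val ℓ' ν₁ := by
      show ((c : ℝ) : EReal) + G.upperVal (ℓ', ν₂) ≤ G.upperVal (ℓ', ν₁)
      unfold SPTG.upperVal
      apply le_iInf
      intro σ
      have step1 : ((c : ℝ) : EReal) + ⨅ σ' : MinStrategy G, ⨆ τ, G.playCost (ℓ', ν₂) σ' τ ≤
          ((c : ℝ) : EReal) + ⨆ τ, G.playCost (ℓ', ν₂) (transfer21Min h01 h12 h2r hurg hnotmin σ) τ :=
        add_le_add_right (iInf_le _ _) _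
      refine le_trans step1 ?_
      rw [EReal.add_iSup']
      apply iSup_le
      intro τ
      have hcost := playCost_corr σ (transfer21Min h01 h12 h2r hurg hnotmin σ)
          (transfer12Max h01 h12 h2r hurg τ) τ h01 h12 h2r hurg hnf
          (by show σ.move (ℓ', ν₁) [] = Option.map (upM ν₁ ν₂) (tmove21 ν₁ ν₂ ℓ' σ.move (ℓ', ν₂) [])
              rw [tmove21_nil]
              cases σ.move (ℓ', ν₁) [] <;> simp)
          (by exact tmove12_nil ν₁ ν₂ ℓ' τ.move)
          (by intro m l' hcm
              exact (tmove21_cons ν₁ ν₂ ℓ' σ.move m l').symm)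
          (by intro m l' hcm
              show tmove12 ν₁ ν₂ ℓ' τ.move _ _ = _
              rw [tmove12_cons (hm := by rw [downM_upM]; exact hcm), downM_upM])
      rw [← hcost]
      exact le_iSup _ (transfer12Max h01 h12 h2r hurg τ)
    rw [hV₁, hV₂] at key2
    rw [← EReal.coe_add, EReal.coe_le_coe_iff] at key2
    show ((G.val ℓ' ν₂).toReal - (G.val ℓ' ν₁).toReal) / (ν₂ - ν₁) ≤ -(G.locWt ℓ' : ℝ)
    rw [hV₁, hV₂, EReal.toReal_coe, EReal.toReal_coe, div_le_iff₀ hd]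
    rw [hc] at key2
    nlinarith [key2]
end
end

section
/- Let G be an SPTG with Val_G(ℓ,ν) ∈ ℝ for all configurations, r ∈ (0,1], and L′ a set of non-urgent non-final locations of G. For every location ℓ ∈ L′ ∩ L_Min and every ν ∈ [0,r], Val_{G_{L′,r}}(ℓ,ν) ≤ (r−ν)·π(ℓ) + Val_G(ℓ,r); and for every ℓ ∈ L′ ∩ L_Max and every ν ∈ [0,r], Val_{G_{L′,r}}(ℓ,ν) ≥ (r−ν)·π(ℓ) + Val_G(ℓ,r). -/
/-!
Formalization of (simple) priced timed games (SPTGs) following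
"One-Clock Priced Timed Games with Negative Weights"
(Brihaye, Geeraerts, Haddad, Lefaucheux, Monmege).
-/

noncomputable section
open scoped Classical

namespace SPTG

/-- Clamp a real number into `[0, G.r]`. -/
def clampR (G : SPTG) (x : ℝ) : ℝ := max 0 (min x G.r)

/-- The game `Waiting(G, r, x)`: every non-urgent non-final location `ℓ` gets a fresh
final clone `ℓ^f` (represented by `Sum.inr ℓ`) with final cost function
`ν ↦ (r - ν)·π(ℓ) + x_ℓ`, reachable from `ℓ` by a new weight-0 transition, and the
clock is now constrained to `[0, r]`. -/
def Waiting (G : SPTG) (r : ℝ) (x : G.Loc → ℝ) : SPTG where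
  Loc := G.Loc ⊕ G.Loc
  isMin := Sum.elim G.isMin fun _ => False
  isMax := Sum.elim G.isMax fun _ => False
  isFin := Sum.elim G.isFin fun _ => True
  partition := by
    rintro (ℓ | ℓ)
    · simpa using G.partition ℓ
    · simp
  isUrg := Sum.elim G.isUrg fun _ => False
  urg_not_fin := by
    rintro (ℓ | ℓ) h
    · simp only [Sum.elim_inl] at h ⊢
      exact G.urg_not_fin ℓ h
    · exact h.elim
  trans := fun a b =>
    match a, b with
    | Sum.inl ℓ, Sum.inl ℓ' => G.trans ℓ ℓ'
    | Sum.inl ℓ, Sum.inr ℓ' => ℓ' = ℓ ∧ ¬G.isUrg ℓ ∧ ¬G.isFin ℓ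
    | Sum.inr _, _ => False
  trans_not_fin := by
    rintro (ℓ | ℓ) (ℓ' | ℓ') h
    · simp only [Sum.elim_inl]
      exact G.trans_not_fin ℓ ℓ' h
    · simp only [Sum.elim_inl]
      exact h.2.2
    · exact h.elim
    · exact h.elim
  r := G.clampR r
  r_nonneg := le_max_left _ _
  r_le_one := max_le zero_le_one ((min_le_right _ _).trans G.r_le_one)
  finSlope := Sum.elim G.finSlope fun ℓ => -(G.locWt ℓ : ℝ)
  finIntercept := Sum.elim G.finIntercept fun ℓ => G.clampR r * (G.locWt ℓ : ℝ) + x ℓ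
  locWt := Sum.elim G.locWt fun _ => 0
  transWt := fun a b =>
    match a, b with
    | Sum.inl ℓ, Sum.inl ℓ' => G.transWt ℓ ℓ'
    | _, _ => 0

/-- The game obtained from `G` by making every (non-final) location of `S` urgent. -/
def makeUrgent (G : SPTG) (S : Set G.Loc) : SPTG :=
  { G with
    isUrg := fun ℓ => G.isUrg ℓ ∨ (ℓ ∈ S ∧ ¬G.isFin ℓ)
    urg_not_fin := by
      rintro ℓ (h | h)
      · exact G.urg_not_fin ℓ h
      · exact h.2 }

/-- `G_r = Waiting(G, r, (Val_G(ℓ, r))_ℓ)`. -/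
def Gwait (G : SPTG) (r : ℝ) : SPTG :=
  G.Waiting r fun ℓ => (G.val ℓ r).toReal

/-- `G_{L',r}`: the game `G_r` in which every location of `L'` has been made urgent. -/
def GLr (G : SPTG) (S : Set G.Loc) (r : ℝ) : SPTG :=
  (G.Gwait r).makeUrgent (Sum.inl '' S)

/-- The operator `Next_{L'}(r)`. -/
def Next (G : SPTG) (S : Set G.Loc) (r : ℝ) : ℝ :=
  sInf {r' : ℝ | 0 ≤ r' ∧ r' ≤ r ∧ ∀ (ℓ : G.Loc) (ν : ℝ), r' ≤ ν → ν ≤ r →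
    (G.GLr S r).val (Sum.inl ℓ) ν = G.val ℓ ν}

end SPTG

namespace SPTGAux
open SPTG

def chMove (H : SPTG) (p : H.Conf → H.Move) (e : H.Conf) : Option H.Move :=
  if H.canMove e (p e) then some (p e)
  else if h : ∃ m, H.canMove e m then some h.choose else none

lemma chMove_spec (H : SPTG) (p : H.Conf → H.Move) (e : H.Conf) (h : ¬H.deadlock e) :
    ∃ m, chMove H p e = some m ∧ H.canMove e m := by
  unfold chMove
  simp only [SPTG.deadlock, not_not] at h
  by_cases h1 : H.canMove e (p e)
  · exact ⟨_, if_pos h1, h1⟩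
  · rw [if_neg h1, dif_pos h]
    exact ⟨_, rfl, h.choose_spec⟩

def minStrat (H : SPTG) (p : H.Conf → H.Move) : SPTG.MinStrategy H where
  move s l := chMove H p (H.endConf s l)
  legal s l _ _ _ hd := chMove_spec H p _ hd

def maxStrat (H : SPTG) (p : H.Conf → H.Move) : SPTG.MaxStrategy H where
  move s l := chMove H p (H.endConf s l)
  legal s l _ _ _ hd := chMove_spec H p _ hd

def pMv (G : SPTG) (S : Set G.Loc) (r : ℝ) (e : (G.GLr S r).Conf) : (G.GLr S r).Move :=
  ⟨0, Sum.elim (fun ℓ => Sum.inr ℓ) (fun ℓ => Sum.inr ℓ) (show G.Loc ⊕ G.Loc from e.1)⟩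

lemma clampR_eq (G : SPTG) (hr : G.r = 1) {r : ℝ} (hr0 : 0 < r) (hr1 : r ≤ 1) :
    G.clampR r = r := by
  unfold SPTG.clampR
  rw [hr, min_eq_left hr1, max_eq_right hr0.le]

lemma GLr_r (G : SPTG) (S : Set G.Loc) (r : ℝ) : (G.GLr S r).r = G.clampR r := rfl

lemma canPref (G : SPTG) (hr : G.r = 1) (S : Set G.Loc) {r : ℝ} (hr0 : 0 < r) (hr1 : r ≤ 1)
    {ℓ : G.Loc} (hu : ¬G.isUrg ℓ) (hf : ¬G.isFin ℓ) {ν : ℝ} (hν : ν ≤ r) :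
    (G.GLr S r).canMove (Sum.inl ℓ, ν) (pMv G S r (Sum.inl ℓ, ν)) := by
  refine ⟨le_refl 0, ?_, ?_, fun _ => rfl⟩
  · show ν + 0 ≤ (G.GLr S r).r
    rw [GLr_r, clampR_eq G hr hr0 hr1]
    linarith
  · exact ⟨rfl, hu, hf⟩

end SPTGAux

namespace SPTGAux
open SPTG

lemma not_dead (G : SPTG) (hr : G.r = 1) (S : Set G.Loc) {r : ℝ} (hr0 : 0 < r) (hr1 : r ≤ 1)
    {ℓ : G.Loc} (hu : ¬G.isUrg ℓ) (hf : ¬G.isFin ℓ) {ν : ℝ} (hν : ν ≤ r) :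
    ¬ (G.GLr S r).deadlock (Sum.inl ℓ, ν) :=
  fun h => h ⟨_, canPref G hr S hr0 hr1 hu hf hν⟩

lemma hist_one_min (G : SPTG) (hr : G.r = 1) (S : Set G.Loc) {r : ℝ} (hr0 : 0 < r) (hr1 : r ≤ 1)
    {ℓ : G.Loc} (hu : ¬G.isUrg ℓ) (hf : ¬G.isFin ℓ) {ν : ℝ} (hν : ν ≤ r)
    (hMin : G.isMin ℓ) (σmax : SPTG.MaxStrategy (G.GLr S r)) :
    (G.GLr S r).hist (minStrat _ (pMv G S r)) σmax (Sum.inl ℓ, ν) 1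
      = [pMv G S r (Sum.inl ℓ, ν)] := by
  show (G.GLr S r).step _ _ _ [] = _
  rw [SPTG.step]
  have he : (G.GLr S r).endConf (Sum.inl ℓ, ν) [] = (Sum.inl ℓ, ν) := rfl
  rw [if_neg (show ¬ (G.GLr S r).deadlock ((G.GLr S r).endConf (Sum.inl ℓ, ν) []) from not_dead G hr S hr0 hr1 hu hf hν),
    if_pos (show (G.GLr S r).isMin ((G.GLr S r).endConf (Sum.inl ℓ, ν) []).1 from hMin)]
  have hm : (minStrat (G.GLr S r) (pMv G S r)).move (Sum.inl ℓ, ν) []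
      = some (pMv G S r (Sum.inl ℓ, ν)) := by
    show chMove _ _ _ = _
    rw [chMove]
    exact if_pos (canPref G hr S hr0 hr1 hu hf hν)
  rw [hm]
  rfl

lemma hist_one_max (G : SPTG) (hr : G.r = 1) (S : Set G.Loc) {r : ℝ} (hr0 : 0 < r) (hr1 : r ≤ 1)
    {ℓ : G.Loc} (hu : ¬G.isUrg ℓ) (hf : ¬G.isFin ℓ) {ν : ℝ} (hν : ν ≤ r)
    (hMax : G.isMax ℓ) (σmin : SPTG.MinStrategy (G.GLr S r)) :
    (G.GLr S r).hist σmin (maxStrat _ (pMv G S r)) (Sum.inl ℓ, ν) 1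
      = [pMv G S r (Sum.inl ℓ, ν)] := by
  have hnotMin : ¬ G.isMin ℓ := by
    rcases G.partition ℓ with ⟨_, h, _⟩ | ⟨h, _, _⟩ | ⟨h, _, _⟩ <;> first | exact h | exact absurd hMax h
  show (G.GLr S r).step _ _ _ [] = _
  rw [SPTG.step]
  have he : (G.GLr S r).endConf (Sum.inl ℓ, ν) [] = (Sum.inl ℓ, ν) := rfl
  rw [if_neg (show ¬ (G.GLr S r).deadlock ((G.GLr S r).endConf (Sum.inl ℓ, ν) []) from not_dead G hr S hr0 hr1 hu hf hν),
    if_neg (show ¬ (G.GLr S r).isMin ((G.GLr S r).endConf (Sum.inl ℓ, ν) []).1 from hnotMin)]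
  have hm : (maxStrat (G.GLr S r) (pMv G S r)).move (Sum.inl ℓ, ν) []
      = some (pMv G S r (Sum.inl ℓ, ν)) := by
    show chMove _ _ _ = _
    rw [chMove]
    exact if_pos (canPref G hr S hr0 hr1 hu hf hν)
  rw [hm]
  rfl

end SPTGAux

namespace SPTGAux
open SPTG

lemma playCost_eq (G : SPTG) (hr : G.r = 1) (S : Set G.Loc) {r : ℝ} (hr0 : 0 < r) (hr1 : r ≤ 1)
    {ℓ : G.Loc} (hf : ¬G.isFin ℓ) {ν : ℝ}
    (σmin : SPTG.MinStrategy (G.GLr S r)) (σmax : SPTG.MaxStrategy (G.GLr S r))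
    (h1 : (G.GLr S r).hist σmin σmax (Sum.inl ℓ, ν) 1 = [pMv G S r (Sum.inl ℓ, ν)]) :
    (G.GLr S r).playCost (Sum.inl ℓ, ν) σmin σmax =
      (((r - ν) * (G.locWt ℓ : ℝ) + (G.val ℓ r).toReal : ℝ) : EReal) := by
  have hfin1 : (G.GLr S r).isFin
      ((G.GLr S r).endConf (Sum.inl ℓ, ν) ((G.GLr S r).hist σmin σmax (Sum.inl ℓ, ν) 1)).1 := by
    rw [h1]; exact trivial
  have hex : ∃ n, (G.GLr S r).isFin
      ((G.GLr S r).endConf (Sum.inl ℓ, ν) ((G.GLr S r).hist σmin σmax (Sum.inl ℓ, ν) n)).1 :=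
    ⟨1, hfin1⟩
  rw [SPTG.playCost, dif_pos hex]
  have hfind : Nat.find hex = 1 := by
    rw [Nat.find_eq_iff]
    refine ⟨hfin1, ?_⟩
    intro n hn
    interval_cases n
    exact hf
  rw [hfind, h1]
  have hprice : (G.GLr S r).finPrice (Sum.inl ℓ, ν) [pMv G S r (Sum.inl ℓ, ν)]
      = (r - ν) * (G.locWt ℓ : ℝ) + (G.val ℓ r).toReal := by
    show (G.GLr S r).moveCost (Sum.inl ℓ, ν) (pMv G S r (Sum.inl ℓ, ν)) +
      (G.GLr S r).finPrice ((G.GLr S r).applyMove (Sum.inl ℓ, ν) (pMv G S r (Sum.inl ℓ, ν))) [] = _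
    have h2 : (G.GLr S r).moveCost (Sum.inl ℓ, ν) (pMv G S r (Sum.inl ℓ, ν)) = 0 := by
      show ((0 : ℤ) : ℝ) + 0 * _ = 0
      ring
    rw [h2]
    have h3 : (G.GLr S r).finPrice ((G.GLr S r).applyMove (Sum.inl ℓ, ν) (pMv G S r (Sum.inl ℓ, ν))) []
        = (G.GLr S r).finalCost (Sum.inr ℓ) (ν + 0) := by
      show (if (G.GLr S r).isFin (Sum.inr ℓ) then _ else 0) = _
      rw [if_pos (show (G.GLr S r).isFin (Sum.inr ℓ) from trivial)]
      rfl
    rw [h3]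
    have h4 : (G.GLr S r).finalCost (Sum.inr ℓ) (ν + 0)
        = -(G.locWt ℓ : ℝ) * (ν + 0) + (G.clampR r * (G.locWt ℓ : ℝ) + (G.val ℓ r).toReal) := rfl
    rw [h4, clampR_eq G hr hr0 hr1]
    ring
  rw [hprice]

end SPTGAux

open SPTG in
/-- **Lemma: waiting until `r` bounds the value in `G_{L',r}`.**
For every `ℓ ∈ L' ∩ L_Min` (resp. `L' ∩ L_Max`) and `ν ∈ [0,r]`,
`Val_{G_{L',r}}(ℓ,ν) ≤ (r-ν)·π(ℓ) + Val_G(ℓ,r)` (resp. `≥`). -/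
theorem GLr_value_vs_waiting (G : SPTG) (hr : G.r = 1) (hrat : G.ratFinal)
    (hfin : ∀ ℓ : G.Loc, ∀ ν : ℝ, 0 ≤ ν → ν ≤ 1 → ∃ v : ℝ, G.val ℓ ν = (v : EReal))
    (r : ℝ) (hr0 : 0 < r) (hr1 : r ≤ 1)
    (L' : Set G.Loc) (hL' : ∀ ℓ ∈ L', ¬G.isUrg ℓ ∧ ¬G.isFin ℓ) :
    ∀ ℓ ∈ L', ∀ ν : ℝ, 0 ≤ ν → ν ≤ r →
      (G.isMin ℓ → (G.GLr L' r).val (Sum.inl ℓ) ν ≤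
        (((r - ν) * (G.locWt ℓ : ℝ) + (G.val ℓ r).toReal : ℝ) : EReal)) ∧
      (G.isMax ℓ → (((r - ν) * (G.locWt ℓ : ℝ) + (G.val ℓ r).toReal : ℝ) : EReal) ≤
        (G.GLr L' r).val (Sum.inl ℓ) ν) := by
  intro ℓ hℓ ν hν0 hνr
  obtain ⟨hu, hf⟩ := hL' ℓ hℓ
  have hval : (G.GLr L' r).val (Sum.inl ℓ) ν =
      ⨅ σmin : SPTG.MinStrategy (G.GLr L' r), ⨆ σmax : SPTG.MaxStrategy (G.GLr L' r),
        (G.GLr L' r).playCost (Sum.inl ℓ, ν) σmin σmax := rfl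
  constructor
  · intro hMin
    rw [hval]
    refine le_trans (iInf_le _ (SPTGAux.minStrat _ (SPTGAux.pMv G L' r)))
      (iSup_le fun σmax => ?_)
    exact (SPTGAux.playCost_eq G hr L' hr0 hr1 hf _ σmax
      (SPTGAux.hist_one_min G hr L' hr0 hr1 hu hf hνr hMin σmax)).le
  · intro hMax
    rw [hval]
    refine le_iInf fun σmin => ?_
    refine le_trans ?_ (le_iSup _ (SPTGAux.maxStrat _ (SPTGAux.pMv G L' r)))
    exact (SPTGAux.playCost_eq G hr L' hr0 hr1 hf σmin _
      (SPTGAux.hist_one_max G hr L' hr0 hr1 hu hf hνr hMax σmin)).ge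
end
end
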